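/- arXiv:1507.03554 — 5 statements merged into one kernel-verified Lean document; each statement's English description precedes it below -/
import Mathlib

section
/- Let K be a field of characteristic p with 3 ≤ p < k-1 ≤ 2p-2 and let f = x^2 y + a y^p + y^{k-1} in K[[x,y]] for any a ∈ K. Then μ(f) = k. -/
open MvPowerSeries Finsupp

noncomputable def pd {n : ℕ} {K : Type} [Field K] (i : Fin n)
    (f : MvPowerSeries (Fin n) K) : MvPowerSeries (Fin n) K :=
  fun m => ((m i + 1 : ℕ) : K) * MvPowerSeries.coeff (R := K) (m + Finsupp.single i 1) f

/-- The Milnor number: dimension of the quotient by the Jacobian ideal. -/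
noncomputable def milnor {n : ℕ} (K : Type) [Field K] (f : MvPowerSeries (Fin n) K) : ℕ :=
  Module.finrank K (MvPowerSeries (Fin n) K ⧸ Ideal.span (Set.range fun i => pd i f))

noncomputable def D (i j : ℕ) : Fin 2 →₀ ℕ := Finsupp.single 0 i + Finsupp.single 1 j

@[simp] lemma D_apply0 (i j : ℕ) : D i j 0 = i := by simp [D]
@[simp] lemma D_apply1 (i j : ℕ) : D i j 1 = j := by simp [D, Finsupp.single_apply]

lemma D_eq_self (m : Fin 2 →₀ ℕ) : D (m 0) (m 1) = m := by
  ext x; fin_cases x <;> simp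

@[simp] lemma D_eq_iff {i j i' j' : ℕ} : D i j = D i' j' ↔ i = i' ∧ j = j' := by
  constructor
  · intro h
    refine ⟨?_, ?_⟩
    · simpa using congrArg (fun f => f 0) h
    · simpa using congrArg (fun f => f 1) h
  · rintro ⟨rfl, rfl⟩; rfl

@[simp] lemma D_le_iff {i j i' j' : ℕ} : D i j ≤ D i' j' ↔ i ≤ i' ∧ j ≤ j' := by
  rw [Finsupp.le_def]
  constructor
  · intro h; exact ⟨by simpa using h 0, by simpa using h 1⟩
  · rintro ⟨h1, h2⟩ x; fin_cases x <;> simpa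

@[simp] lemma D_add (i j i' j' : ℕ) : D i j + D i' j' = D (i + i') (j + j') := by
  ext x; fin_cases x <;> simp

@[simp] lemma D_sub (i j i' j' : ℕ) : D i j - D i' j' = D (i - i') (j - j') := by
  ext x; fin_cases x <;> simp [Finsupp.tsub_apply]

lemma single0 (i : ℕ) : Finsupp.single (0 : Fin 2) i = D i 0 := by simp [D]
lemma single1 (j : ℕ) : Finsupp.single (1 : Fin 2) j = D 0 j := by simp [D]

section
variable {K : Type} [Field K]

lemma f_eq (p k : ℕ) (a : K) :
    (X (0 : Fin 2) ^ 2 * X 1 + C (σ := Fin 2) (R := K) a * X 1 ^ p + X 1 ^ (k - 1)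
      : MvPowerSeries (Fin 2) K)
    = monomial (R := K) (D 2 1) 1 + monomial (R := K) (D 0 p) a + monomial (R := K) (D 0 (k-1)) 1 := by
  rw [X_pow_eq, X_pow_eq, X_pow_eq, ← monomial_zero_eq_C_apply,
    show (X 1 : MvPowerSeries (Fin 2) K) = monomial (R := K) (Finsupp.single 1 1) 1 from rfl,
    monomial_mul_monomial, monomial_mul_monomial]
  rw [single0, single1, single1, single1]
  norm_num

lemma coeff_pd (i : Fin 2) (f : MvPowerSeries (Fin 2) K) (m : Fin 2 →₀ ℕ) :
    MvPowerSeries.coeff (R := K) m (pd i f)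
      = ((m i + 1 : ℕ) : K) * MvPowerSeries.coeff (R := K) (m + Finsupp.single i 1) f := rfl

lemma pd0_eq (p k : ℕ) (a : K) :
    pd 0 (X (0 : Fin 2) ^ 2 * X 1 + C (σ := Fin 2) (R := K) a * X 1 ^ p + X 1 ^ (k - 1))
      = monomial (R := K) (D 1 1) 2 := by
  ext m
  obtain ⟨i, j, rfl⟩ : ∃ i j, m = D i j := ⟨m 0, m 1, (D_eq_self m).symm⟩
  rw [coeff_pd, f_eq, single0]
  simp only [map_add, coeff_monomial, D_add, D_apply0, D_eq_iff]
  have hcond : (i + 1 = 2 ∧ j + 0 = 1) ↔ (i = 1 ∧ j = 1) := by omega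
  simp only [Nat.succ_ne_zero, false_and, if_false, hcond, add_zero, add_eq_zero,
    and_false, one_ne_zero]
  by_cases h : i = 1 ∧ j = 1
  · obtain ⟨rfl, rfl⟩ := h; norm_num
  · simp [h]

lemma pd1_eq (p k : ℕ) [CharP K p] (hp : 3 ≤ p) (hk1 : p < k - 1) (a : K) :
    pd 1 (X (0 : Fin 2) ^ 2 * X 1 + C (σ := Fin 2) (R := K) a * X 1 ^ p + X 1 ^ (k - 1))
      = monomial (R := K) (D 2 0) 1 + monomial (R := K) (D 0 (k-2)) ((k - 1 : ℕ) : K) := by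
  ext m
  obtain ⟨i, j, rfl⟩ : ∃ i j, m = D i j := ⟨m 0, m 1, (D_eq_self m).symm⟩
  rw [coeff_pd, f_eq, single1]
  simp only [map_add, coeff_monomial, D_add, D_apply1, D_eq_iff]
  have c1 : (i + 0 = 2 ∧ j + 1 = 1) ↔ (i = 2 ∧ j = 0) := by omega
  have c2 : (i + 0 = 0 ∧ j + 1 = p) ↔ (i = 0 ∧ j = p - 1) := by omega
  have c3 : (i + 0 = 0 ∧ j + 1 = k - 1) ↔ (i = 0 ∧ j = k - 2) := by omega
  simp only [c1, c2, c3]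
  split_ifs <;> try (exfalso; omega)
  · obtain ⟨rfl, rfl⟩ := ‹i = 2 ∧ j = 0›
    norm_num
  · obtain ⟨rfl, h⟩ := ‹i = 0 ∧ j = p - 1›
    subst h
    rw [show p - 1 + 1 = p by omega]
    simp [CharP.cast_eq_zero K p]
  · obtain ⟨rfl, h⟩ := ‹i = 0 ∧ j = k - 2›
    subst h
    rw [show k - 2 + 1 = k - 1 by omega]
    ring
  · simp

noncomputable def idx (k : ℕ) (i : Fin k) : Fin 2 →₀ ℕ :=
  if (i : ℕ) = 0 then D 0 0 else if (i : ℕ) = 1 then D 1 0 else D 0 ((i : ℕ) - 1)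

noncomputable def phi (K : Type) [Field K] (k : ℕ) (c : K) :
    MvPowerSeries (Fin 2) K →ₗ[K] (Fin k → K) :=
  LinearMap.pi fun i => MvPowerSeries.coeff (R := K) (idx k i) -
    (if (i : ℕ) = k - 1 then c • MvPowerSeries.coeff (R := K) (D 2 0) else 0)

lemma phi_apply (k : ℕ) (c : K) (g : MvPowerSeries (Fin 2) K) (i : Fin k) :
    phi K k c g i = MvPowerSeries.coeff (R := K) (idx k i) g -
      (if (i : ℕ) = k - 1 then c * MvPowerSeries.coeff (R := K) (D 2 0) g else 0) := by
  simp [phi, LinearMap.pi_apply, LinearMap.sub_apply,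
    apply_ite (fun L : MvPowerSeries (Fin 2) K →ₗ[K] K => L g), smul_eq_mul]

lemma idx_inj (k : ℕ) (hk : 5 ≤ k) : Function.Injective (idx k) := by
  intro i i' h
  simp only [idx] at h
  have hi := i.isLt
  have hi' := i'.isLt
  split_ifs at h <;> rw [D_eq_iff] at h <;> (apply Fin.ext; omega)

lemma idx_ne (k : ℕ) (i : Fin k) : idx k i ≠ D 2 0 := by
  simp only [idx]
  split_ifs <;> simp [D_eq_iff]

lemma phi_surj (k : ℕ) (hk : 5 ≤ k) (c : K) : Function.Surjective (phi K k c) := by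
  intro w
  refine ⟨∑ i : Fin k, w i • monomial (R := K) (idx k i) 1, ?_⟩
  funext i₀
  rw [phi_apply]
  have h1 : MvPowerSeries.coeff (R := K) (idx k i₀) (∑ i : Fin k, w i • monomial (R := K) (idx k i) 1)
      = w i₀ := by
    rw [map_sum]
    rw [Finset.sum_eq_single i₀]
    · simp
    · intro i _ hne
      rw [map_smul, smul_eq_mul, coeff_monomial_ne (fun h => hne ((idx_inj k hk) h).symm), mul_zero]
    · intro h; exact absurd (Finset.mem_univ i₀) h
  have h2 : MvPowerSeries.coeff (R := K) (D 2 0) (∑ i : Fin k, w i • monomial (R := K) (idx k i) 1) = 0 := by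
    rw [map_sum]
    apply Finset.sum_eq_zero
    intro i _
    rw [map_smul, smul_eq_mul, coeff_monomial_ne (fun h => idx_ne k i h.symm), mul_zero]
  rw [h1, h2]
  simp

lemma phi_hu (k : ℕ) (c : K) (h : MvPowerSeries (Fin 2) K) :
    phi K k c (h * monomial (R := K) (D 1 1) 2) = 0 := by
  funext i
  rw [phi_apply]
  have key : ∀ m : Fin 2 →₀ ℕ, m = D 0 0 ∨ m = D 1 0 ∨ (∃ t, m = D 0 t) ∨ m = D 2 0 →
      MvPowerSeries.coeff (R := K) m (h * monomial (R := K) (D 1 1) 2) = 0 := by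
    intro m hm
    rw [coeff_mul_monomial, if_neg]
    rcases hm with rfl | rfl | ⟨t, rfl⟩ | rfl <;> rw [D_le_iff] <;> omega
  rw [key _ (by simp only [idx]; split_ifs <;> [exact Or.inl rfl; exact Or.inr (Or.inl rfl);
    exact Or.inr (Or.inr (Or.inl ⟨_, rfl⟩))]), key _ (Or.inr (Or.inr (Or.inr rfl)))]
  simp

lemma phi_hv (k : ℕ) (hk : 5 ≤ k) (c : K) (h : MvPowerSeries (Fin 2) K) :
    phi K k c (h * (monomial (R := K) (D 2 0) 1 + monomial (R := K) (D 0 (k - 2)) c)) = 0 := by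
  funext i
  rw [phi_apply]
  have expand : ∀ m : Fin 2 →₀ ℕ,
      MvPowerSeries.coeff (R := K) m (h * (monomial (R := K) (D 2 0) 1 + monomial (R := K) (D 0 (k - 2)) c)) =
      (if D 2 0 ≤ m then MvPowerSeries.coeff (R := K) (m - D 2 0) h * 1 else 0) +
      (if D 0 (k - 2) ≤ m then MvPowerSeries.coeff (R := K) (m - D 0 (k - 2)) h * c else 0) := by
    intro m
    rw [mul_add, map_add, coeff_mul_monomial, coeff_mul_monomial]
  have hi := i.isLt
  by_cases hend : (i : ℕ) = k - 1
  · have hidx : idx k i = D 0 (k - 2) := by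
      simp only [idx, hend]
      rw [if_neg (by omega), if_neg (by omega), D_eq_iff]
      omega
    rw [hidx, if_pos hend, expand, expand]
    rw [if_neg (by rw [D_le_iff]; omega), if_pos (by rw [D_le_iff]; omega),
      if_pos (by rw [D_le_iff]; omega), if_neg (by rw [D_le_iff]; omega)]
    rw [show D 0 (k-2) - D 0 (k-2) = D 0 0 by rw [D_sub, D_eq_iff]; omega,
      show D 2 0 - D 2 0 = D 0 0 by rw [D_sub, D_eq_iff]; omega]
    simp only [Pi.zero_apply]
    ring
  · rw [if_neg hend, sub_zero, expand, if_neg, if_neg]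
    · simp
    · simp only [idx]; split_ifs <;> rw [D_le_iff] <;> omega
    · simp only [idx]; split_ifs <;> rw [D_le_iff] <;> omega

lemma ker_le_span (k : ℕ) (hk : 5 ≤ k) (c : K) (hc : c ≠ 0) (h2 : (2 : K) ≠ 0)
    (g : MvPowerSeries (Fin 2) K)
    (h00 : MvPowerSeries.coeff (R := K) (D 0 0) g = 0)
    (h10 : MvPowerSeries.coeff (R := K) (D 1 0) g = 0)
    (h0j : ∀ j, 1 ≤ j → j ≤ k - 3 → MvPowerSeries.coeff (R := K) (D 0 j) g = 0)
    (hlast : MvPowerSeries.coeff (R := K) (D 0 (k - 2)) g = c * MvPowerSeries.coeff (R := K) (D 2 0) g) :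
    ∃ A B : MvPowerSeries (Fin 2) K,
      A * monomial (R := K) (D 1 1) 2 +
        B * (monomial (R := K) (D 2 0) 1 + monomial (R := K) (D 0 (k - 2)) c) = g := by
  set v : MvPowerSeries (Fin 2) K :=
    monomial (R := K) (D 2 0) 1 + monomial (R := K) (D 0 (k - 2)) c with hv
  set B : MvPowerSeries (Fin 2) K := fun m =>
    if m 1 = 0 then MvPowerSeries.coeff (R := K) (D (m 0 + 2) 0) g
    else if m 0 = 0 then c⁻¹ * MvPowerSeries.coeff (R := K) (D 0 (m 1 + (k - 2))) g
    else 0 with hB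
  have hBapp : ∀ a b : ℕ, MvPowerSeries.coeff (R := K) (D a b) B =
      if b = 0 then MvPowerSeries.coeff (R := K) (D (a + 2) 0) g
      else if a = 0 then c⁻¹ * MvPowerSeries.coeff (R := K) (D 0 (b + (k - 2))) g
      else 0 := by
    intro a b
    rw [coeff_apply, hB]
    simp
  have hBv : ∀ i j : ℕ, MvPowerSeries.coeff (R := K) (D i j) (B * v) =
      (if 2 ≤ i then MvPowerSeries.coeff (R := K) (D (i - 2) j) B else 0) +
      (if k - 2 ≤ j then MvPowerSeries.coeff (R := K) (D i (j - (k - 2))) B * c else 0) := by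
    intro i j
    rw [hv, mul_add, map_add, coeff_mul_monomial, coeff_mul_monomial]
    congr 1
    · by_cases h1 : 2 ≤ i
      · rw [if_pos (show D 2 0 ≤ D i j by rw [D_le_iff]; omega), if_pos h1, D_sub, mul_one,
          Nat.sub_zero]
      · rw [if_neg (show ¬ D 2 0 ≤ D i j by rw [D_le_iff]; omega), if_neg h1]
    · by_cases h1 : k - 2 ≤ j
      · rw [if_pos (show D 0 (k - 2) ≤ D i j by rw [D_le_iff]; omega), if_pos h1, D_sub,
          Nat.sub_zero]
      · rw [if_neg (show ¬ D 0 (k - 2) ≤ D i j by rw [D_le_iff]; omega), if_neg h1]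
  have hBvg : ∀ i j : ℕ, i = 0 ∨ j = 0 →
      MvPowerSeries.coeff (R := K) (D i j) (B * v) = MvPowerSeries.coeff (R := K) (D i j) g := by
    rintro i j (rfl | rfl)
    · rw [hBv, if_neg (show ¬ 2 ≤ 0 by omega), zero_add]
      by_cases h : k - 2 ≤ j
      · rw [if_pos h, hBapp]
        by_cases hj : j - (k - 2) = 0
        · rw [if_pos hj, show j = k - 2 by omega, hlast]
          ring
        · rw [if_neg hj, if_pos rfl, show j - (k - 2) + (k - 2) = j by omega]
          field_simp
      · rw [if_neg h]
        rcases Nat.eq_zero_or_pos j with rfl | hj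
        · rw [h00]
        · rw [h0j j hj (by omega)]
    · rw [hBv, if_neg (show ¬ k - 2 ≤ 0 by omega), add_zero]
      by_cases h : 2 ≤ i
      · rw [if_pos h, hBapp, if_pos rfl, show i - 2 + 2 = i by omega]
      · rw [if_neg h]
        interval_cases i
        · rw [h00]
        · rw [h10]
  refine ⟨show MvPowerSeries (Fin 2) K from fun m => (2⁻¹ : K) * (MvPowerSeries.coeff (R := K) (m + D 1 1) g
    - MvPowerSeries.coeff (R := K) (m + D 1 1) (B * v)), B, ?_⟩
  ext m
  obtain ⟨i, j, rfl⟩ : ∃ i j, m = D i j := ⟨m 0, m 1, (D_eq_self m).symm⟩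
  rw [map_add, coeff_mul_monomial]
  by_cases hij : 1 ≤ i ∧ 1 ≤ j
  · rw [if_pos (by rw [D_le_iff]; exact hij), D_sub, coeff_apply]
    beta_reduce
    rw [D_add, show i - 1 + 1 = i by omega, show j - 1 + 1 = j by omega]
    field_simp
    ring
  · rw [if_neg (by rw [D_le_iff]; exact hij), zero_add]
    exact hBvg i j (by omega)
end

theorem stmt2 (K : Type) [Field K] (p k : ℕ) [CharP K p] (hp : 3 ≤ p)
    (hk1 : p < k - 1) (hk2 : k - 1 ≤ 2 * p - 2) (a : K) :
    milnor K (X (0 : Fin 2) ^ 2 * X 1 + C (σ := Fin 2) (R := K) a * X 1 ^ p + X 1 ^ (k - 1)) = k := by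
  have hk5 : 5 ≤ k := by omega
  set c : K := ((k - 1 : ℕ) : K) with hcdef
  set f : MvPowerSeries (Fin 2) K :=
    X (0 : Fin 2) ^ 2 * X 1 + C (σ := Fin 2) (R := K) a * X 1 ^ p + X 1 ^ (k - 1) with hf
  have hnd : ¬ (p ∣ (k - 1)) := by
    rintro ⟨t, ht⟩
    have ht2 : 2 ≤ t := by
      rcases Nat.lt_or_ge t 2 with h | h
      · interval_cases t <;> omega
      · exact h
    have : 2 * p ≤ p * t := by
      calc 2 * p = p * 2 := by ring
        _ ≤ p * t := Nat.mul_le_mul_left p ht2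
    omega
  have hc : c ≠ 0 := fun h => hnd ((CharP.cast_eq_zero_iff K p _).mp h)
  have h2 : (2 : K) ≠ 0 := by
    have : ¬ ((2 : ℕ) : K) = 0 := by
      intro h
      have := (CharP.cast_eq_zero_iff K p 2).mp h
      have := Nat.le_of_dvd (by norm_num) this
      omega
    simpa using this
  have hpd0 : pd 0 f = monomial (R := K) (D 1 1) 2 := pd0_eq p k a
  have hpd1 : pd 1 f = monomial (R := K) (D 2 0) 1 + monomial (R := K) (D 0 (k - 2)) c :=
    pd1_eq p k hp hk1 a
  have hrange : (Set.range fun i : Fin 2 => pd i f) = {pd 0 f, pd 1 f} := by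
    ext x
    simp only [Set.mem_range, Set.mem_insert_iff, Set.mem_singleton_iff]
    constructor
    · rintro ⟨i, rfl⟩
      fin_cases i
      · exact Or.inl rfl
      · exact Or.inr rfl
    · rintro (rfl | rfl)
      exacts [⟨0, rfl⟩, ⟨1, rfl⟩]
  set I : Ideal (MvPowerSeries (Fin 2) K) := Ideal.span {pd 0 f, pd 1 f} with hI
  have hker : LinearMap.ker (phi K k c) = I.restrictScalars K := by
    ext g
    rw [LinearMap.mem_ker, Submodule.restrictScalars_mem, hI, Ideal.mem_span_pair]
    constructor
    · intro hphi
      have e0 : MvPowerSeries.coeff (R := K) (D 0 0) g = 0 := by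
        have h := congrFun hphi ⟨0, by omega⟩
        rw [phi_apply] at h
        simpa [idx, show ¬ (0 : ℕ) = k - 1 by omega] using h
      have e1 : MvPowerSeries.coeff (R := K) (D 1 0) g = 0 := by
        have h := congrFun hphi ⟨1, by omega⟩
        rw [phi_apply] at h
        simpa [idx, show ¬ (1 : ℕ) = k - 1 by omega] using h
      have e0j : ∀ j, 1 ≤ j → j ≤ k - 3 → MvPowerSeries.coeff (R := K) (D 0 j) g = 0 := by
        intro j hj1 hj2
        have h := congrFun hphi ⟨j + 1, by omega⟩
        rw [phi_apply] at h
        simpa [idx, show ¬ (j + 1 : ℕ) = 0 by omega, show ¬ (j + 1 : ℕ) = 1 by omega,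
          show ¬ (j + 1 : ℕ) = k - 1 by omega, Nat.add_sub_cancel, show ¬ j = 0 by omega] using h
      have elast : MvPowerSeries.coeff (R := K) (D 0 (k - 2)) g
          = c * MvPowerSeries.coeff (R := K) (D 2 0) g := by
        have h := congrFun hphi ⟨k - 1, by omega⟩
        rw [phi_apply] at h
        have hidx : idx k (⟨k - 1, by omega⟩ : Fin k) = D 0 (k - 2) := by
          simp only [idx]
          rw [if_neg (by omega), if_neg (by omega), D_eq_iff]
          omega
        rw [hidx, if_pos (by simp)] at h
        simp only [Pi.zero_apply] at h
        exact sub_eq_zero.mp h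
      obtain ⟨A, B, hAB⟩ := ker_le_span k hk5 c hc h2 g e0 e1 e0j elast
      exact ⟨A, B, by rw [hpd0, hpd1]; exact hAB⟩
    · rintro ⟨A, B, rfl⟩
      rw [map_add, hpd0, hpd1, phi_hu, phi_hv k hk5]
      simp
  have hsurj := phi_surj k hk5 c
  have equiv1 := Submodule.Quotient.restrictScalarsEquiv K I
  have equiv2 := (phi K k c).quotKerEquivOfSurjective hsurj
  rw [hker] at equiv2
  unfold milnor
  rw [hrange, ← hI]
  rw [← LinearEquiv.finrank_eq equiv1, LinearEquiv.finrank_eq equiv2,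
    Module.finrank_fin_fun]
end

section
/- Let K be a field of characteristic p > 7 and f = x^3 + y^7 + a x y^5 ∈ K[[x,y]] for a ∈ K. Then μ(f) = 12. -/
open MvPowerSeries

set_option linter.unusedVariables false
set_option linter.unreachableTactic false
set_option linter.unusedTactic false

namespace E12
variable {K : Type} [Field K]

abbrev RR (K : Type) [Field K] := MvPowerSeries (Fin 2) K

noncomputable def sm (i j : ℕ) : Fin 2 →₀ ℕ := Finsupp.single 0 i + Finsupp.single 1 j

@[simp] lemma sm_apply0 (i j : ℕ) : sm i j 0 = i := by
  simp [sm, Finsupp.single_apply]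

@[simp] lemma sm_apply1 (i j : ℕ) : sm i j 1 = j := by
  simp [sm, Finsupp.single_apply]

lemma eq_sm (m : Fin 2 →₀ ℕ) : m = sm (m 0) (m 1) := by
  ext x
  fin_cases x <;> simp

lemma sm_inj {i j k l : ℕ} : sm i j = sm k l ↔ i = k ∧ j = l := by
  constructor
  · intro h
    constructor
    · have := congrArg (fun t => t 0) h; simpa using this
    · have := congrArg (fun t => t 1) h; simpa using this
  · rintro ⟨rfl, rfl⟩; rfl

lemma sm_le {i j k l : ℕ} : sm i j ≤ sm k l ↔ i ≤ k ∧ j ≤ l := by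
  rw [Finsupp.le_def]
  constructor
  · intro h; exact ⟨by simpa using h 0, by simpa using h 1⟩
  · rintro ⟨h1, h2⟩ x; fin_cases x <;> simpa

lemma sm_le' {i j : ℕ} {m : Fin 2 →₀ ℕ} : sm i j ≤ m ↔ i ≤ m 0 ∧ j ≤ m 1 := by
  conv_lhs => rw [eq_sm m]
  exact sm_le

@[simp] lemma sm_add (i j k l : ℕ) : sm i j + sm k l = sm (i+k) (j+l) := by
  ext x; fin_cases x <;> simp

lemma sm_sub (i j k l : ℕ) : sm i j - sm k l = sm (i-k) (j-l) := by
  ext x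
  fin_cases x <;> simp [Finsupp.tsub_apply]

noncomputable def mn (i j : ℕ) (c : K) : RR K := MvPowerSeries.monomial (R := K) (sm i j) c

lemma coeff_mn (i j k l : ℕ) (c : K) :
    MvPowerSeries.coeff (R := K) (sm i j) (mn k l c) = if i = k ∧ j = l then c else 0 := by
  classical
  rw [mn, MvPowerSeries.coeff_monomial]
  by_cases h : sm i j = sm k l
  · rw [if_pos h, if_pos (sm_inj.mp h)]
  · rw [if_neg h, if_neg (fun hh => h (by rw [hh.1, hh.2]))]

lemma coeff_mn_mul (i j k l : ℕ) (c : K) (u : RR K) :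
    MvPowerSeries.coeff (R := K) (sm i j) (mn k l c * u)
      = if k ≤ i ∧ l ≤ j then c * MvPowerSeries.coeff (R := K) (sm (i-k) (j-l)) u else 0 := by
  classical
  rw [mn, MvPowerSeries.coeff_monomial_mul]
  by_cases h : k ≤ i ∧ l ≤ j
  · rw [if_pos (sm_le'.mpr (by simpa using h)), if_pos h, sm_sub]
  · rw [if_neg h, if_neg (fun hh => h (by simpa using sm_le'.mp hh))]

lemma coeff_mul_mn (i j k l : ℕ) (c : K) (u : RR K) :
    MvPowerSeries.coeff (R := K) (sm i j) (u * mn k l c)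
      = if k ≤ i ∧ l ≤ j then c * MvPowerSeries.coeff (R := K) (sm (i-k) (j-l)) u else 0 := by
  rw [mul_comm, coeff_mn_mul]

lemma mn_eq (i j : ℕ) (c : K) : mn i j c = C (σ := Fin 2) (R := K) c * X 0 ^ i * X 1 ^ j := by
  rw [mn, MvPowerSeries.X_pow_eq, MvPowerSeries.X_pow_eq, ← MvPowerSeries.monomial_zero_eq_C_apply,
    MvPowerSeries.monomial_mul_monomial, MvPowerSeries.monomial_mul_monomial, mul_one, mul_one, sm, zero_add]

/-- the polynomial f -/
noncomputable def ff (a : K) : RR K := X 0 ^ 3 + X 1 ^ 7 + C (σ := Fin 2) (R := K) a * X 0 * X 1 ^ 5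
noncomputable def g1 (a : K) : RR K := mn 2 0 3 + mn 0 5 a
noncomputable def g2 (a : K) : RR K := mn 0 6 7 + mn 1 4 (5*a)

lemma ff_eq (a : K) : ff a = mn 3 0 1 + mn 0 7 1 + mn 1 5 a := by
  simp only [ff, mn_eq, map_one]
  ring

lemma single01 : (Finsupp.single (0 : Fin 2) 1 : Fin 2 →₀ ℕ) = sm 1 0 := by
  ext x; fin_cases x <;> simp [sm]

lemma single11 : (Finsupp.single (1 : Fin 2) 1 : Fin 2 →₀ ℕ) = sm 0 1 := by
  ext x; fin_cases x <;> simp [sm]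

lemma pd_apply {n : ℕ} (i : Fin n) (f : MvPowerSeries (Fin n) K) (m : Fin n →₀ ℕ) :
    MvPowerSeries.coeff (R := K) m (pd i f)
      = ((m i + 1 : ℕ) : K) * MvPowerSeries.coeff (R := K) (m + Finsupp.single i 1) f := rfl

lemma pd_zero_ff (a : K) : pd 0 (ff a) = g1 a := by
  apply MvPowerSeries.ext; intro m
  obtain ⟨i, j, rfl⟩ : ∃ i j, m = sm i j := ⟨m 0, m 1, eq_sm m⟩
  rw [pd_apply, single01, sm_add, ff_eq]
  simp only [map_add, coeff_mn, g1, sm_apply0]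
  by_cases hi : 4 ≤ i
  · split_ifs <;> first | (push_cast; ring1) | (exfalso; omega) | (exfalso; tauto)
  · by_cases hj : 8 ≤ j
    · split_ifs <;> first | (push_cast; ring1) | (exfalso; omega) | (exfalso; tauto)
    · interval_cases i <;> interval_cases j <;> norm_num

lemma pd_one_ff (a : K) : pd 1 (ff a) = g2 a := by
  apply MvPowerSeries.ext; intro m
  obtain ⟨i, j, rfl⟩ : ∃ i j, m = sm i j := ⟨m 0, m 1, eq_sm m⟩
  rw [pd_apply, single11, sm_add, ff_eq]
  simp only [map_add, coeff_mn, g2, sm_apply1]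
  by_cases hi : 4 ≤ i
  · split_ifs <;> first | (push_cast; ring1) | (exfalso; omega) | (exfalso; tauto)
  · by_cases hj : 8 ≤ j
    · split_ifs <;> first | (push_cast; ring1) | (exfalso; omega) | (exfalso; tauto)
    · interval_cases i <;> interval_cases j <;> norm_num

/-- the Jacobian ideal -/
noncomputable def J (a : K) : Ideal (RR K) := Ideal.span {g1 a, g2 a}

lemma span_eq (a : K) :
    Ideal.span (Set.range fun i : Fin 2 => pd i (ff a)) = J a := by
  rw [J]
  congr 1
  ext z
  simp [Fin.exists_fin_two, pd_zero_ff, pd_one_ff]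
  tauto

lemma nat_ne (p : ℕ) [CharP K p] (hp : 7 < p) (n : ℕ) (h0 : 0 < n) (h7 : n ≤ 7) :
    ((n : ℕ) : K) ≠ 0 := by
  intro h
  have hd := (CharP.cast_eq_zero_iff K p n).mp h
  have := Nat.le_of_dvd h0 hd
  omega

lemma g1_mem (a : K) : g1 a ∈ J a := Ideal.subset_span (by simp)
lemma g2_mem (a : K) : g2 a ∈ J a := Ideal.subset_span (by simp)

lemma C_mul_mem {a c : K} (hc : c ≠ 0) {z : RR K} (h : C (σ := Fin 2) (R := K) c * z ∈ J a) :
    z ∈ J a := by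
  have h2 := Ideal.mul_mem_left (J a) (C (σ := Fin 2) (R := K) c⁻¹) h
  rwa [← mul_assoc, ← map_mul, inv_mul_cancel₀ hc, map_one, one_mul] at h2

lemma y8_mem {a : K} (h3 : (3:K) ≠ 0) (h7 : (7:K) ≠ 0) : ((X 1 : RR K))^8 ∈ J a := by
  have hid : (C (σ := Fin 2) (R := K) 21 * X 1 ^ 2 - C (σ := Fin 2) (R := K) (15*a) * X 0) * g2 a
      + C (σ := Fin 2) (R := K) (25*a^2) * X 1 ^ 4 * g1 a
      = X 1 ^ 8 * (C (σ := Fin 2) (R := K) 147 + C (σ := Fin 2) (R := K) (25*a^3) * X 1) := by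
    simp only [g1, g2, mn_eq, map_mul, map_pow, map_ofNat]
    ring1
  have hmem : X 1 ^ 8 * (C (σ := Fin 2) (R := K) 147 + C (σ := Fin 2) (R := K) (25*a^3) * X 1) ∈ J a := by
    rw [← hid]
    exact Ideal.add_mem _ (Ideal.mul_mem_left _ _ (g2_mem a)) (Ideal.mul_mem_left _ _ (g1_mem a))
  have hu : IsUnit (C (σ := Fin 2) (R := K) 147 + C (σ := Fin 2) (R := K) (25*a^3) * X 1) := by
    rw [MvPowerSeries.isUnit_iff_constantCoeff]
    simp only [map_add, map_mul, MvPowerSeries.constantCoeff_C, MvPowerSeries.constantCoeff_X,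
      mul_zero, add_zero]
    have : (147 : K) = 3 * 7 * 7 := by norm_num
    rw [this]
    exact (mul_ne_zero (mul_ne_zero h3 h7) h7).isUnit
  obtain ⟨v, hv⟩ := hu.exists_right_inv
  have := Ideal.mul_mem_right v _ hmem
  rwa [mul_assoc, hv, mul_one] at this

lemma x2y3_mem {a : K} (h3 : (3:K) ≠ 0) (h7 : (7:K) ≠ 0) :
    ((X 0 : RR K))^2 * X 1 ^ 3 ∈ J a := by
  apply C_mul_mem h3
  have hid : C (σ := Fin 2) (R := K) 3 * (X 0 ^ 2 * X 1 ^ 3)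
      = X 1 ^ 3 * g1 a - C (σ := Fin 2) (R := K) a * X 1 ^ 8 := by
    simp only [g1, mn_eq, map_mul, map_pow, map_ofNat]
    ring1
  rw [hid]
  exact Ideal.sub_mem _ (Ideal.mul_mem_left _ _ (g1_mem a))
    (Ideal.mul_mem_left _ _ (y8_mem h3 h7))

lemma x4_mem {a : K} (h3 : (3:K) ≠ 0) (h7 : (7:K) ≠ 0) : ((X 0 : RR K))^4 ∈ J a := by
  apply C_mul_mem h3
  have hid : C (σ := Fin 2) (R := K) 3 * (X 0 ^ 4)
      = X 0 ^ 2 * g1 a - C (σ := Fin 2) (R := K) a * (X 0 ^ 2 * X 1 ^ 3 * X 1 ^ 2) := by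
    simp only [g1, mn_eq, map_mul, map_pow, map_ofNat]
    ring1
  rw [hid]
  exact Ideal.sub_mem _ (Ideal.mul_mem_left _ _ (g1_mem a))
    (Ideal.mul_mem_left _ _ (Ideal.mul_mem_right _ _ (x2y3_mem h3 h7)))

lemma coeff_fun (g : (Fin 2 →₀ ℕ) → K) (d : Fin 2 →₀ ℕ) :
    MvPowerSeries.coeff (R := K) d (g : RR K) = g d := rfl

lemma tail_mem {a : K} (h3 : (3:K) ≠ 0) (h7 : (7:K) ≠ 0) (t : RR K)
    (hv : ∀ i j, i ≤ 3 → j ≤ 7 → MvPowerSeries.coeff (R := K) (sm i j) t = 0) : t ∈ J a := by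
  classical
  let A : RR K := fun m => MvPowerSeries.coeff (R := K) (m + sm 2 3) t
  let B : RR K := fun m => if m 0 ≤ 1 then MvPowerSeries.coeff (R := K) (m + sm 0 8) t else 0
  let D : RR K := fun m => if m 1 ≤ 2 then MvPowerSeries.coeff (R := K) (m + sm 4 0) t else 0
  have hdec : t = mn 2 3 1 * A + mn 0 8 1 * B + mn 4 0 1 * D := by
    apply MvPowerSeries.ext; intro m
    obtain ⟨i, j, rfl⟩ : ∃ i j, m = sm i j := ⟨m 0, m 1, eq_sm m⟩
    rw [map_add, map_add, coeff_mn_mul, coeff_mn_mul, coeff_mn_mul]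
    have hA : (if 2 ≤ i ∧ 3 ≤ j then (1:K) * MvPowerSeries.coeff (R := K) (sm (i-2) (j-3)) A else 0)
        = if 2 ≤ i ∧ 3 ≤ j then MvPowerSeries.coeff (R := K) (sm i j) t else 0 := by
      by_cases h : 2 ≤ i ∧ 3 ≤ j
      · rw [if_pos h, if_pos h, one_mul]
        show MvPowerSeries.coeff (R := K) (sm (i-2) (j-3) + sm 2 3) t = _
        rw [sm_add]
        have e : i - 2 + 2 = i := by omega
        have e' : j - 3 + 3 = j := by omega
        rw [e, e']
      · rw [if_neg h, if_neg h]
    have hB : (if 0 ≤ i ∧ 8 ≤ j then (1:K) * MvPowerSeries.coeff (R := K) (sm (i-0) (j-8)) B else 0)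
        = if 8 ≤ j then (if i ≤ 1 then MvPowerSeries.coeff (R := K) (sm i j) t else 0) else 0 := by
      by_cases h : 8 ≤ j
      · rw [if_pos ⟨Nat.zero_le i, h⟩, if_pos h, one_mul]
        show (if (sm (i-0) (j-8)) 0 ≤ 1 then MvPowerSeries.coeff (R := K) (sm (i-0) (j-8) + sm 0 8) t else 0) = _
        rw [sm_add, sm_apply0]
        have e3 : j - 8 + 8 = j := by omega
        simp only [Nat.sub_zero, Nat.add_zero, e3]
      · rw [if_neg (fun hh => h hh.2), if_neg h]
    have hD : (if 4 ≤ i ∧ 0 ≤ j then (1:K) * MvPowerSeries.coeff (R := K) (sm (i-4) (j-0)) D else 0)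
        = if 4 ≤ i then (if j ≤ 2 then MvPowerSeries.coeff (R := K) (sm i j) t else 0) else 0 := by
      by_cases h : 4 ≤ i
      · rw [if_pos ⟨h, Nat.zero_le j⟩, if_pos h, one_mul]
        show (if (sm (i-4) (j-0)) 1 ≤ 2 then MvPowerSeries.coeff (R := K) (sm (i-4) (j-0) + sm 4 0) t else 0) = _
        rw [sm_add, sm_apply1]
        have e3 : i - 4 + 4 = i := by omega
        simp only [Nat.sub_zero, Nat.add_zero, e3]
      · rw [if_neg (fun hh => h hh.1), if_neg h]
    rw [hA, hB, hD]
    split_ifs <;>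
      first
        | (exfalso; omega)
        | ring1
        | (rw [hv i j (by omega) (by omega)]; ring1)
  rw [hdec]
  have m1 : (mn 2 3 1 : RR K) ∈ J a := by
    rw [mn_eq, map_one, one_mul]; exact x2y3_mem h3 h7
  have m2 : (mn 0 8 1 : RR K) ∈ J a := by
    rw [mn_eq, map_one, one_mul, pow_zero, one_mul]; exact y8_mem h3 h7
  have m3 : (mn 4 0 1 : RR K) ∈ J a := by
    rw [mn_eq, map_one, one_mul, pow_zero, mul_one]; exact x4_mem h3 h7
  exact Ideal.add_mem _ (Ideal.add_mem _ (Ideal.mul_mem_right _ _ m1)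
    (Ideal.mul_mem_right _ _ m2)) (Ideal.mul_mem_right _ _ m3)

noncomputable def Mb : Fin 12 → RR K :=
  ![mn 0 0 1, mn 0 1 1, mn 0 2 1, mn 0 3 1, mn 0 4 1, mn 0 5 1,
    mn 1 0 1, mn 1 1 1, mn 1 2 1, mn 1 3 1, mn 1 4 1, mn 1 5 1]

noncomputable def W (a : K) : Submodule K (RR K) :=
  Submodule.restrictScalars K (J a) ⊔ Submodule.span K (Set.range (Mb (K := K)))

lemma J_le_W {a : K} {z : RR K} (hz : z ∈ J a) : z ∈ W a :=
  Submodule.mem_sup_left hz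

lemma Mb_mem {a : K} (r : Fin 12) : Mb (K := K) r ∈ W a :=
  Submodule.mem_sup_right (Submodule.subset_span ⟨r, rfl⟩)

lemma W_C_mul {a : K} (c : K) {z : RR K} (hz : z ∈ W a) : C (σ := Fin 2) (R := K) c * z ∈ W a := by
  rw [← MvPowerSeries.smul_eq_C_mul]
  exact (W a).smul_mem c hz

lemma W_C_inv {a c : K} (hc : c ≠ 0) {z : RR K} (h : C (σ := Fin 2) (R := K) c * z ∈ W a) : z ∈ W a := by
  have h2 := W_C_mul (a := a) c⁻¹ h
  rwa [← mul_assoc, ← map_mul, inv_mul_cancel₀ hc, map_one, one_mul] at h2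

lemma y_mem {a : K} (h3 : (3:K) ≠ 0) (h7 : (7:K) ≠ 0) (l : ℕ) (hl : l ≤ 7) :
    ((X 1 : RR K))^l ∈ W a := by
  interval_cases l
  · simpa [Mb, mn_eq] using Mb_mem (a := a) 0
  · simpa [Mb, mn_eq] using Mb_mem (a := a) 1
  · simpa [Mb, mn_eq] using Mb_mem (a := a) 2
  · simpa [Mb, mn_eq] using Mb_mem (a := a) 3
  · simpa [Mb, mn_eq] using Mb_mem (a := a) 4
  · simpa [Mb, mn_eq] using Mb_mem (a := a) 5
  · -- l = 6
    apply W_C_inv h7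
    have hid : C (σ := Fin 2) (R := K) 7 * (X 1 ^ 6 : RR K) = g2 a - C (σ := Fin 2) (R := K) (5*a) * (X 0 * X 1 ^ 4) := by
      simp only [g2, mn_eq, map_mul, map_ofNat]
      ring1
    rw [hid]
    refine Submodule.sub_mem _ (J_le_W (g2_mem a)) (W_C_mul _ ?_)
    simpa [Mb, mn_eq] using Mb_mem (a := a) 10
  · -- l = 7
    apply W_C_inv h7
    have hid : C (σ := Fin 2) (R := K) 7 * (X 1 ^ 7 : RR K) = X 1 * g2 a - C (σ := Fin 2) (R := K) (5*a) * (X 0 * X 1 ^ 5) := by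
      simp only [g2, mn_eq, map_mul, map_ofNat]
      ring1
    rw [hid]
    refine Submodule.sub_mem _ (J_le_W (Ideal.mul_mem_left _ _ (g2_mem a))) (W_C_mul _ ?_)
    simpa [Mb, mn_eq] using Mb_mem (a := a) 11

lemma xy_mem {a : K} (h3 : (3:K) ≠ 0) (h7 : (7:K) ≠ 0) (l : ℕ) (hl : l ≤ 7) :
    (X 0 : RR K) * X 1 ^ l ∈ W a := by
  interval_cases l
  · simpa [Mb, mn_eq] using Mb_mem (a := a) 6
  · simpa [Mb, mn_eq] using Mb_mem (a := a) 7
  · simpa [Mb, mn_eq] using Mb_mem (a := a) 8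
  · simpa [Mb, mn_eq] using Mb_mem (a := a) 9
  · simpa [Mb, mn_eq] using Mb_mem (a := a) 10
  · simpa [Mb, mn_eq] using Mb_mem (a := a) 11
  · -- l = 6 : in J
    apply J_le_W
    apply C_mul_mem h7
    have hid : C (σ := Fin 2) (R := K) 7 * ((X 0 : RR K) * X 1 ^ 6)
        = X 0 * g2 a - C (σ := Fin 2) (R := K) (5*a) * (X 0 ^ 2 * X 1 ^ 3 * X 1) := by
      simp only [g2, mn_eq, map_mul, map_ofNat]
      ring1
    rw [hid]
    exact Submodule.sub_mem _ (Ideal.mul_mem_left _ _ (g2_mem a))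
      (Ideal.mul_mem_left _ _ (Ideal.mul_mem_right _ _ (x2y3_mem h3 h7)))
  · -- l = 7 : in J
    apply J_le_W
    apply C_mul_mem h7
    have hid : C (σ := Fin 2) (R := K) 7 * ((X 0 : RR K) * X 1 ^ 7)
        = X 0 * X 1 * g2 a - C (σ := Fin 2) (R := K) (5*a) * (X 0 ^ 2 * X 1 ^ 3 * X 1 ^ 2) := by
      simp only [g2, mn_eq, map_mul, map_ofNat]
      ring1
    rw [hid]
    exact Submodule.sub_mem _ (Ideal.mul_mem_left _ _ (g2_mem a))
      (Ideal.mul_mem_left _ _ (Ideal.mul_mem_right _ _ (x2y3_mem h3 h7)))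

lemma x2y_mem {a : K} (h3 : (3:K) ≠ 0) (h7 : (7:K) ≠ 0) (l : ℕ) (hl : l ≤ 7) :
    (X 0 : RR K) ^ 2 * X 1 ^ l ∈ W a := by
  by_cases h : 3 ≤ l
  · apply J_le_W
    have hid : (X 0 : RR K) ^ 2 * X 1 ^ l = X 0 ^ 2 * X 1 ^ 3 * X 1 ^ (l - 3) := by
      rw [mul_assoc, ← pow_add]
      congr 2
      omega
    rw [hid]
    exact Ideal.mul_mem_right _ _ (x2y3_mem h3 h7)
  · apply W_C_inv h3
    have h5 : (X 1 : RR K) ^ (5 + l) ∈ W a := y_mem h3 h7 (5 + l) (by omega)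
    have hid : C (σ := Fin 2) (R := K) 3 * ((X 0 : RR K) ^ 2 * X 1 ^ l)
        = X 1 ^ l * g1 a - C (σ := Fin 2) (R := K) a * X 1 ^ (5 + l) := by
      simp only [g1, mn_eq, map_mul, map_ofNat]
      rw [pow_add]
      ring1
    rw [hid]
    exact Submodule.sub_mem _ (J_le_W (Ideal.mul_mem_left _ _ (g1_mem a))) (W_C_mul _ h5)

lemma x3y_mem {a : K} (h3 : (3:K) ≠ 0) (h7 : (7:K) ≠ 0) (l : ℕ) (hl : l ≤ 7) :
    (X 0 : RR K) ^ 3 * X 1 ^ l ∈ W a := by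
  by_cases h : 3 ≤ l
  · apply J_le_W
    have hid : (X 0 : RR K) ^ 3 * X 1 ^ l = X 0 ^ 2 * X 1 ^ 3 * (X 0 * X 1 ^ (l - 3)) := by
      have e : (X 1 : RR K) ^ 3 * X 1 ^ (l - 3) = X 1 ^ l := by
        rw [← pow_add]
        congr 1
        omega
      calc (X 0 : RR K) ^ 3 * X 1 ^ l = X 0 ^ 3 * (X 1 ^ 3 * X 1 ^ (l-3)) := by rw [e]
        _ = X 0 ^ 2 * X 1 ^ 3 * (X 0 * X 1 ^ (l - 3)) := by ring1
    rw [hid]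
    exact Ideal.mul_mem_right _ _ (x2y3_mem h3 h7)
  · apply W_C_inv h3
    have h5 : (X 0 : RR K) * X 1 ^ (5 + l) ∈ W a := xy_mem h3 h7 (5 + l) (by omega)
    have hid : C (σ := Fin 2) (R := K) 3 * ((X 0 : RR K) ^ 3 * X 1 ^ l)
        = X 0 * X 1 ^ l * g1 a - C (σ := Fin 2) (R := K) a * (X 0 * X 1 ^ (5 + l)) := by
      simp only [g1, mn_eq, map_mul, map_ofNat]
      rw [pow_add]
      ring1
    rw [hid]
    exact Submodule.sub_mem _ (J_le_W (Ideal.mul_mem_left _ _ (g1_mem a))) (W_C_mul _ h5)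

lemma mono_mem {a : K} (h3 : (3:K) ≠ 0) (h7 : (7:K) ≠ 0) (k l : ℕ) (hk : k ≤ 3) (hl : l ≤ 7) :
    (mn k l 1 : RR K) ∈ W a := by
  rw [mn_eq, map_one, one_mul]
  interval_cases k
  · simpa using y_mem h3 h7 l hl
  · simpa [pow_one] using xy_mem h3 h7 l hl
  · exact x2y_mem h3 h7 l hl
  · exact x3y_mem h3 h7 l hl

lemma W_eq_top {a : K} (h3 : (3:K) ≠ 0) (h7 : (7:K) ≠ 0) (g : RR K) : g ∈ W a := by
  classical
  set S : Finset (ℕ × ℕ) := Finset.range 4 ×ˢ Finset.range 8 with hS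
  set q : RR K := ∑ p ∈ S, MvPowerSeries.coeff (R := K) (sm p.1 p.2) g • mn p.1 p.2 1 with hq
  have hqW : q ∈ W a := by
    apply Submodule.sum_mem
    rintro ⟨k, l⟩ hp
    simp only [hS, Finset.mem_product, Finset.mem_range] at hp
    exact Submodule.smul_mem _ _ (mono_mem h3 h7 k l (by omega) (by omega))
  have hcoeff : ∀ i j, i ≤ 3 → j ≤ 7 →
      MvPowerSeries.coeff (R := K) (sm i j) q = MvPowerSeries.coeff (R := K) (sm i j) g := by
    intro i j hi hj
    rw [hq, map_sum, Finset.sum_eq_single (i, j)]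
    · rw [MvPowerSeries.coeff_smul, coeff_mn, if_pos ⟨rfl, rfl⟩, mul_one]
    · rintro ⟨k, l⟩ hb hne
      rw [MvPowerSeries.coeff_smul, coeff_mn, if_neg, mul_zero]
      rintro ⟨rfl, rfl⟩
      exact hne rfl
    · intro hni
      exfalso
      apply hni
      simp only [hS, Finset.mem_product, Finset.mem_range]
      omega
  have ht : g - q ∈ J a := by
    apply tail_mem h3 h7
    intro i j hi hj
    rw [map_sub, hcoeff i j hi hj, sub_self]
  have hg : g = (g - q) + q := by ring
  rw [hg]
  exact Submodule.add_mem _ (J_le_W ht) hqW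

-- functionals vanishing on J
lemma F1 {a : K} {z : RR K} (hz : z ∈ J a) (i j : ℕ) (hi : i ≤ 1) (hj : j ≤ 4)
    (hne : ¬(i = 1 ∧ j = 4)) : MvPowerSeries.coeff (R := K) (sm i j) z = 0 := by
  obtain ⟨r1, r2, hz⟩ := Ideal.mem_span_pair.mp hz
  rw [← hz]
  simp only [g1, g2, mul_add, map_add, coeff_mul_mn]
  split_ifs <;> first | (exfalso; omega) | ring1

lemma F5 {a : K} {z : RR K} (hz : z ∈ J a) :
    3 * MvPowerSeries.coeff (R := K) (sm 0 5) z - a * MvPowerSeries.coeff (R := K) (sm 2 0) z = 0 := by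
  obtain ⟨r1, r2, hz⟩ := Ideal.mem_span_pair.mp hz
  rw [← hz]
  simp only [g1, g2, mul_add, map_add, coeff_mul_mn]
  norm_num
  ring1

lemma F6 {a : K} {z : RR K} (hz : z ∈ J a) :
    -21 * MvPowerSeries.coeff (R := K) (sm 1 4) z + 15 * a * MvPowerSeries.coeff (R := K) (sm 0 6) z
      - 5 * a^2 * MvPowerSeries.coeff (R := K) (sm 2 1) z = 0 := by
  obtain ⟨r1, r2, hz⟩ := Ideal.mem_span_pair.mp hz
  rw [← hz]
  simp only [g1, g2, mul_add, map_add, coeff_mul_mn]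
  norm_num
  ring1

lemma F7 {a : K} {z : RR K} (hz : z ∈ J a) :
    21 * MvPowerSeries.coeff (R := K) (sm 1 5) z - 15 * a * MvPowerSeries.coeff (R := K) (sm 0 7) z
      + 5 * a^2 * MvPowerSeries.coeff (R := K) (sm 2 2) z
      - 7 * a * MvPowerSeries.coeff (R := K) (sm 3 0) z = 0 := by
  obtain ⟨r1, r2, hz⟩ := Ideal.mem_span_pair.mp hz
  rw [← hz]
  simp only [g1, g2, mul_add, map_add, coeff_mul_mn]
  norm_num
  ring1

lemma coeff_comb (c : Fin 12 → K) (i j : ℕ) :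
    MvPowerSeries.coeff (R := K) (sm i j) (∑ r, c r • Mb (K := K) r)
      = (if i = 0 ∧ j = 0 then c 0 else 0) + (if i = 0 ∧ j = 1 then c 1 else 0)
      + (if i = 0 ∧ j = 2 then c 2 else 0) + (if i = 0 ∧ j = 3 then c 3 else 0)
      + (if i = 0 ∧ j = 4 then c 4 else 0) + (if i = 0 ∧ j = 5 then c 5 else 0)
      + (if i = 1 ∧ j = 0 then c 6 else 0) + (if i = 1 ∧ j = 1 then c 7 else 0)
      + (if i = 1 ∧ j = 2 then c 8 else 0) + (if i = 1 ∧ j = 3 then c 9 else 0)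
      + (if i = 1 ∧ j = 4 then c 10 else 0) + (if i = 1 ∧ j = 5 then c 11 else 0) := by
  rw [map_sum]
  rw [Fin.sum_univ_succ, Fin.sum_univ_succ, Fin.sum_univ_succ, Fin.sum_univ_succ,
    Fin.sum_univ_succ, Fin.sum_univ_succ, Fin.sum_univ_succ, Fin.sum_univ_succ,
    Fin.sum_univ_succ, Fin.sum_univ_succ, Fin.sum_univ_succ, Fin.sum_univ_one]
  simp only [Mb, Matrix.cons_val_zero, Matrix.cons_val_one, Matrix.head_cons,
    Matrix.cons_val_succ, MvPowerSeries.coeff_smul, coeff_mn, mul_ite, mul_one, mul_zero]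
  simp only [show (Fin.succ 0 : Fin 12) = 1 from rfl,
    show ((Fin.succ 0).succ : Fin 12) = 2 from rfl,
    show ((Fin.succ 0).succ.succ : Fin 12) = 3 from rfl,
    show ((Fin.succ 0).succ.succ.succ : Fin 12) = 4 from rfl,
    show ((Fin.succ 0).succ.succ.succ.succ : Fin 12) = 5 from rfl,
    show ((Fin.succ 0).succ.succ.succ.succ.succ : Fin 12) = 6 from rfl,
    show ((Fin.succ 0).succ.succ.succ.succ.succ.succ : Fin 12) = 7 from rfl,
    show ((Fin.succ 0).succ.succ.succ.succ.succ.succ.succ : Fin 12) = 8 from rfl,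
    show ((Fin.succ 0).succ.succ.succ.succ.succ.succ.succ.succ : Fin 12) = 9 from rfl,
    show ((Fin.succ 0).succ.succ.succ.succ.succ.succ.succ.succ.succ : Fin 12) = 10 from rfl,
    show ((Fin.succ 0).succ.succ.succ.succ.succ.succ.succ.succ.succ.succ : Fin 12) = 11 from rfl]
  ring1

lemma indep {a : K} (h3 : (3:K) ≠ 0) (h7 : (7:K) ≠ 0) (c : Fin 12 → K)
    (hc : (∑ r, c r • Mb (K := K) r) ∈ J a) : c = 0 := by
  have h21 : (21 : K) ≠ 0 := by
    have : (21 : K) = 3 * 7 := by norm_num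
    rw [this]
    exact mul_ne_zero h3 h7
  funext r
  fin_cases r
  · have h := F1 hc 0 0 (by omega) (by omega) (by omega); simp only [coeff_comb] at h; norm_num at h; exact h
  · have h := F1 hc 0 1 (by omega) (by omega) (by omega); simp only [coeff_comb] at h; norm_num at h; exact h
  · have h := F1 hc 0 2 (by omega) (by omega) (by omega); simp only [coeff_comb] at h; norm_num at h; exact h
  · have h := F1 hc 0 3 (by omega) (by omega) (by omega); simp only [coeff_comb] at h; norm_num at h; exact h
  · have h := F1 hc 0 4 (by omega) (by omega) (by omega); simp only [coeff_comb] at h; norm_num at h; exact h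
  · have h := F5 hc; simp only [coeff_comb] at h; norm_num at h
    exact h.resolve_left h3
  · have h := F1 hc 1 0 (by omega) (by omega) (by omega); simp only [coeff_comb] at h; norm_num at h; exact h
  · have h := F1 hc 1 1 (by omega) (by omega) (by omega); simp only [coeff_comb] at h; norm_num at h; exact h
  · have h := F1 hc 1 2 (by omega) (by omega) (by omega); simp only [coeff_comb] at h; norm_num at h; exact h
  · have h := F1 hc 1 3 (by omega) (by omega) (by omega); simp only [coeff_comb] at h; norm_num at h; exact h
  · have h := F6 hc; simp only [coeff_comb] at h; norm_num at h
    exact h.resolve_left h21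
  · have h := F7 hc; simp only [coeff_comb] at h; norm_num at h
    exact h.resolve_left h21
end E12

theorem stmt3 (K : Type) [Field K] (p : ℕ) [CharP K p] (hp : 7 < p) (a : K) :
    milnor K (X (0 : Fin 2) ^ 3 + X 1 ^ 7 + C (σ := Fin 2) (R := K) a * X 0 * X 1 ^ 5) = 12 := by
  have h3 : (3:K) ≠ 0 := by
    have := E12.nat_ne (K := K) p hp 3 (by norm_num) (by norm_num)
    simpa using this
  have h7 : (7:K) ≠ 0 := by
    have := E12.nat_ne (K := K) p hp 7 (by norm_num) (by norm_num)
    simpa using this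
  have hfe : (X (0 : Fin 2) ^ 3 + X 1 ^ 7 + C (σ := Fin 2) (R := K) a * X 0 * X 1 ^ 5 :
      MvPowerSeries (Fin 2) K) = E12.ff a := rfl
  rw [milnor, hfe, E12.span_eq a]
  let mk := Ideal.Quotient.mkₐ K (E12.J a)
  have hmk : ∀ x : E12.RR K, Ideal.Quotient.mk (E12.J a) x = mk x := fun _ => rfl
  have hli : LinearIndependent K (fun r => mk (E12.Mb (K := K) r)) := by
    rw [Fintype.linearIndependent_iff]
    intro c hc r
    have hmem : (∑ r, c r • E12.Mb (K := K) r) ∈ E12.J a := by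
      rw [← Ideal.Quotient.eq_zero_iff_mem, hmk, map_sum]
      simp only [map_smul]
      exact hc
    have h0 := E12.indep h3 h7 c hmem
    exact congrFun h0 r
  have hsp : ⊤ ≤ Submodule.span K (Set.range (fun r => mk (E12.Mb (K := K) r))) := by
    rintro z -
    obtain ⟨g, rfl⟩ := Ideal.Quotient.mk_surjective z
    have hg := E12.W_eq_top (a := a) h3 h7 g
    rw [E12.W] at hg
    obtain ⟨y, hy, w, hw, rfl⟩ := Submodule.mem_sup.mp hg
    rw [Submodule.restrictScalars_mem] at hy
    have h1 : Ideal.Quotient.mk (E12.J a) y = 0 := Ideal.Quotient.eq_zero_iff_mem.mpr hy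
    rw [map_add, h1, zero_add, hmk]
    have h2 := Submodule.apply_mem_span_image_of_mem_span (mk.toLinearMap) hw
    rw [← Set.range_comp] at h2
    exact h2
  let b : Module.Basis (Fin 12) K (E12.RR K ⧸ E12.J a) := Module.Basis.mk hli hsp
  rw [Module.finrank_eq_card_basis b]
  simp
end

section
/- Let K be a field of characteristic p > 3 and f = x^4 + y^4 + a x^2 y^2 ∈ K[[x,y]] with a^2 ≠ 4. Then μ(f) = 9. -/
open MvPowerSeries

namespace X9

variable {K : Type} [Field K]

/-- exponent vector (i,j) -/
noncomputable def E (i j : ℕ) : Fin 2 →₀ ℕ := Finsupp.single 0 i + Finsupp.single 1 j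

@[simp] lemma E_apply0 (i j : ℕ) : E i j 0 = i := by
  simp [E, Finsupp.single_apply]

@[simp] lemma E_apply1 (i j : ℕ) : E i j 1 = j := by
  simp [E, Finsupp.single_apply]

lemma eq_E (m : Fin 2 →₀ ℕ) : m = E (m 0) (m 1) := by
  ext s
  match s with
  | 0 => simp
  | 1 => simp

@[simp] lemma E_inj {i j k l : ℕ} : E i j = E k l ↔ i = k ∧ j = l := by
  constructor
  · intro h
    constructor
    · have := congrArg (fun m => m 0) h; simpa using this
    · have := congrArg (fun m => m 1) h; simpa using this
  · rintro ⟨rfl, rfl⟩; rfl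

lemma E_le_E {a b i j : ℕ} : E a b ≤ E i j ↔ a ≤ i ∧ b ≤ j := by
  constructor
  · intro h
    exact ⟨by simpa using h 0, by simpa using h 1⟩
  · intro ⟨h1, h2⟩ s
    match s with
    | 0 => simpa using h1
    | 1 => simpa using h2

lemma E_sub {i j a b : ℕ} : E i j - E a b = E (i - a) (j - b) := by
  ext s
  match s with
  | 0 => simp [Finsupp.tsub_apply]
  | 1 => simp [Finsupp.tsub_apply]

lemma E_add {i j a b : ℕ} : E i j + E a b = E (i + a) (j + b) := by
  ext s
  match s with
  | 0 => simp
  | 1 => simp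

end X9

namespace X9

variable {K : Type} [Field K]

/-- coefficient of `x^i y^j` -/
noncomputable def c (i j : ℕ) (f : MvPowerSeries (Fin 2) K) : K :=
  MvPowerSeries.coeff (R := K) (E i j) f

/-- the monomial `r x^i y^j` -/
noncomputable def M (i j : ℕ) (r : K) : MvPowerSeries (Fin 2) K :=
  MvPowerSeries.monomial (R := K) (E i j) r

lemma c_add (i j : ℕ) (f g : MvPowerSeries (Fin 2) K) :
    c i j (f + g) = c i j f + c i j g := by simp [c]

lemma c_M (i j k l : ℕ) (r : K) :
    c i j (M k l r) = if i = k ∧ j = l then r else 0 := by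
  rw [c, M, MvPowerSeries.coeff_monomial]
  by_cases h : E i j = E k l
  · rw [if_pos h, if_pos (E_inj.mp h)]
  · rw [if_neg h, if_neg (fun hc => h (E_inj.mpr hc))]

lemma c_M_mul (i j u v : ℕ) (r : K) (h : MvPowerSeries (Fin 2) K) :
    c i j (M u v r * h) = if u ≤ i ∧ v ≤ j then r * c (i - u) (j - v) h else 0 := by
  rw [c, M, MvPowerSeries.coeff_monomial_mul]
  by_cases hc : E u v ≤ E i j
  · rw [if_pos hc, if_pos (E_le_E.mp hc), E_sub]; rfl
  · rw [if_neg hc, if_neg (fun hx => hc (E_le_E.mpr hx))]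

lemma M_eq (i j : ℕ) (r : K) :
    M i j r = MvPowerSeries.C (σ := Fin 2) (R := K) r * X 0 ^ i * X 1 ^ j := by
  rw [M, E, X_pow_eq, X_pow_eq, ← MvPowerSeries.monomial_zero_eq_C_apply,
    MvPowerSeries.monomial_mul_monomial, MvPowerSeries.monomial_mul_monomial,
    mul_one, mul_one, zero_add]

end X9

namespace X9

variable {K : Type} [Field K]

lemma ext_c {f g : MvPowerSeries (Fin 2) K} (h : ∀ i j, c i j f = c i j g) : f = g := by
  ext m
  have := h (m 0) (m 1)
  rwa [c, c, ← eq_E m] at this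

lemma single0_eq_E : (Finsupp.single 0 1 : Fin 2 →₀ ℕ) = E 1 0 := by
  ext s
  match s with
  | 0 => simp
  | 1 => simp

lemma single1_eq_E : (Finsupp.single 1 1 : Fin 2 →₀ ℕ) = E 0 1 := by
  ext s
  match s with
  | 0 => simp
  | 1 => simp

lemma c_pd0 (i j : ℕ) (f : MvPowerSeries (Fin 2) K) :
    c i j (pd 0 f) = ((i + 1 : ℕ) : K) * c (i + 1) j f := by
  have : pd 0 f (E i j) = ((E i j 0 + 1 : ℕ) : K) *
      MvPowerSeries.coeff (R := K) (E i j + Finsupp.single 0 1) f := rfl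
  rw [c, MvPowerSeries.coeff_apply, this, single0_eq_E, E_add, E_apply0]
  rfl

lemma c_pd1 (i j : ℕ) (f : MvPowerSeries (Fin 2) K) :
    c i j (pd 1 f) = ((j + 1 : ℕ) : K) * c i (j + 1) f := by
  have : pd 1 f (E i j) = ((E i j 1 + 1 : ℕ) : K) *
      MvPowerSeries.coeff (R := K) (E i j + Finsupp.single 1 1) f := rfl
  rw [c, MvPowerSeries.coeff_apply, this, single1_eq_E, E_add, E_apply1]
  rfl

/-- the power series `x^4 + y^4 + a x^2 y^2` -/
noncomputable def Fa (a : K) : MvPowerSeries (Fin 2) K := M 4 0 1 + M 0 4 1 + M 2 2 a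

lemma Fa_eq (a : K) :
    X (0 : Fin 2) ^ 4 + X 1 ^ 4 + MvPowerSeries.C (σ := Fin 2) (R := K) a * X 0 ^ 2 * X 1 ^ 2 = Fa a := by
  simp only [Fa, M_eq, map_one, one_mul, pow_zero, mul_one]

/-- `∂F/∂x = 4x³ + 2axy²` -/
noncomputable def G1 (a : K) : MvPowerSeries (Fin 2) K := M 3 0 4 + M 1 2 (2 * a)

/-- `∂F/∂y = 4y³ + 2ax²y` -/
noncomputable def G2 (a : K) : MvPowerSeries (Fin 2) K := M 0 3 4 + M 2 1 (2 * a)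

lemma pd0_Fa (a : K) : pd 0 (Fa a) = G1 a := by
  apply ext_c
  intro i j
  rw [c_pd0]
  by_cases h1 : i = 3 ∧ j = 0
  · obtain ⟨rfl, rfl⟩ := h1; norm_num [Fa, G1, c_add, c_M]
  by_cases h2 : i = 1 ∧ j = 2
  · obtain ⟨rfl, rfl⟩ := h2; norm_num [Fa, G1, c_add, c_M]
  · simp only [Fa, G1, c_add, c_M]
    rw [if_neg (by omega), if_neg (by omega), if_neg (by omega), if_neg (by omega),
      if_neg (by omega)]
    ring

lemma pd1_Fa (a : K) : pd 1 (Fa a) = G2 a := by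
  apply ext_c
  intro i j
  rw [c_pd1]
  by_cases h1 : i = 0 ∧ j = 3
  · obtain ⟨rfl, rfl⟩ := h1; norm_num [Fa, G2, c_add, c_M]
  by_cases h2 : i = 2 ∧ j = 1
  · obtain ⟨rfl, rfl⟩ := h2; norm_num [Fa, G2, c_add, c_M]
  · simp only [Fa, G2, c_add, c_M]
    rw [if_neg (by omega), if_neg (by omega), if_neg (by omega), if_neg (by omega),
      if_neg (by omega)]
    ring

lemma G1_eq (a : K) :
    G1 a = 4 * X 0 ^ 3 + 2 * MvPowerSeries.C (σ := Fin 2) (R := K) a * X 0 * X 1 ^ 2 := by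
  simp only [G1, M_eq, map_mul, map_ofNat, pow_zero, mul_one]
  ring

lemma G2_eq (a : K) :
    G2 a = 4 * X 1 ^ 3 + 2 * MvPowerSeries.C (σ := Fin 2) (R := K) a * X 0 ^ 2 * X 1 := by
  simp only [G2, M_eq, map_mul, map_ofNat, pow_zero, mul_one]
  ring

end X9

namespace X9

variable {K : Type} [Field K]

lemma mem_of_C_mul_mem {d : K} (hd : d ≠ 0) {u : MvPowerSeries (Fin 2) K}
    {I : Ideal (MvPowerSeries (Fin 2) K)} (h : MvPowerSeries.C (σ := Fin 2) (R := K) d * u ∈ I) :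
    u ∈ I := by
  have h2 := I.mul_mem_left (MvPowerSeries.C (σ := Fin 2) (R := K) d⁻¹) h
  rwa [← mul_assoc, ← map_mul, inv_mul_cancel₀ hd, map_one, one_mul] at h2

section Members

variable (a : K)

local notation "JJ" => Ideal.span ({G1 a, G2 a} : Set (MvPowerSeries (Fin 2) K))
local notation "Ca" => MvPowerSeries.C (σ := Fin 2) (R := K) a

lemma hG1_mem : G1 a ∈ JJ := Ideal.subset_span (by simp)
lemma hG2_mem : G2 a ∈ JJ := Ideal.subset_span (by simp)

variable {a}
variable (h2 : (2 : K) ≠ 0) (ha : a ^ 2 ≠ 4)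
include h2 ha

lemma hd8 : (8 : K) - 2 * a ^ 2 ≠ 0 := by
  intro h
  apply ha
  have : (2 : K) * (4 - a ^ 2) = 0 := by linear_combination h
  rcases mul_eq_zero.mp this with h' | h'
  · exact absurd h' h2
  · linear_combination -h'

lemma hm31 : (X 0 : MvPowerSeries (Fin 2) K) ^ 3 * X 1 ∈ JJ := by
  apply mem_of_C_mul_mem (hd8 h2 ha)
  rw [Ideal.mem_span_pair]
  refine ⟨2 * X 1, -(Ca * X 0), ?_⟩
  rw [G1_eq, G2_eq]
  simp only [map_sub, map_mul, map_ofNat, map_pow]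
  ring

lemma hm13 : (X 0 : MvPowerSeries (Fin 2) K) * X 1 ^ 3 ∈ JJ := by
  apply mem_of_C_mul_mem (hd8 h2 ha)
  rw [Ideal.mem_span_pair]
  refine ⟨-(Ca * X 1), 2 * X 0, ?_⟩
  rw [G1_eq, G2_eq]
  simp only [map_sub, map_mul, map_ofNat, map_pow]
  ring

lemma hm41 : (X 0 : MvPowerSeries (Fin 2) K) ^ 4 * X 1 ∈ JJ := by
  have h := Ideal.mul_mem_left JJ (X 0) (hm31 h2 ha)
  rwa [show (X 0 : MvPowerSeries (Fin 2) K) * (X 0 ^ 3 * X 1) = X 0 ^ 4 * X 1 from by ring] at h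

lemma hm32 : (X 0 : MvPowerSeries (Fin 2) K) ^ 3 * X 1 ^ 2 ∈ JJ := by
  have h := Ideal.mul_mem_left JJ (X 1) (hm31 h2 ha)
  rwa [show (X 1 : MvPowerSeries (Fin 2) K) * (X 0 ^ 3 * X 1) = X 0 ^ 3 * X 1 ^ 2 from by
    ring] at h

lemma hm23 : (X 0 : MvPowerSeries (Fin 2) K) ^ 2 * X 1 ^ 3 ∈ JJ := by
  have h := Ideal.mul_mem_left JJ (X 0) (hm13 h2 ha)
  rwa [show (X 0 : MvPowerSeries (Fin 2) K) * (X 0 * X 1 ^ 3) = X 0 ^ 2 * X 1 ^ 3 from by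
    ring] at h

lemma hm14 : (X 0 : MvPowerSeries (Fin 2) K) * X 1 ^ 4 ∈ JJ := by
  have h := Ideal.mul_mem_left JJ (X 1) (hm13 h2 ha)
  rwa [show (X 1 : MvPowerSeries (Fin 2) K) * (X 0 * X 1 ^ 3) = X 0 * X 1 ^ 4 from by ring] at h

lemma hm50 : (X 0 : MvPowerSeries (Fin 2) K) ^ 5 ∈ JJ := by
  have h4 : (4 : K) ≠ 0 := by
    intro h
    apply h2
    have : (2 : K) * 2 = 0 := by linear_combination h
    rcases mul_eq_zero.mp this with h' | h' <;> exact h'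
  apply mem_of_C_mul_mem h4
  have hmem : (X 0 : MvPowerSeries (Fin 2) K) ^ 2 * G1 a -
      2 * Ca * X 1 * (X 0 ^ 3 * X 1) ∈ JJ :=
    Ideal.sub_mem _ (Ideal.mul_mem_left _ _ (hG1_mem a))
      (Ideal.mul_mem_left _ _ (hm31 h2 ha))
  have heq : MvPowerSeries.C (σ := Fin 2) (R := K) 4 * X 0 ^ 5 =
      (X 0 : MvPowerSeries (Fin 2) K) ^ 2 * G1 a - 2 * Ca * X 1 * (X 0 ^ 3 * X 1) := by
    rw [G1_eq]
    simp only [map_ofNat]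
    ring
  rw [heq]; exact hmem

lemma hm05 : (X 1 : MvPowerSeries (Fin 2) K) ^ 5 ∈ JJ := by
  have h4 : (4 : K) ≠ 0 := by
    intro h
    apply h2
    have : (2 : K) * 2 = 0 := by linear_combination h
    rcases mul_eq_zero.mp this with h' | h' <;> exact h'
  apply mem_of_C_mul_mem h4
  have hmem : (X 1 : MvPowerSeries (Fin 2) K) ^ 2 * G2 a -
      2 * Ca * X 0 * (X 0 * X 1 ^ 3) ∈ JJ :=
    Ideal.sub_mem _ (Ideal.mul_mem_left _ _ (hG2_mem a))
      (Ideal.mul_mem_left _ _ (hm13 h2 ha))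
  have heq : MvPowerSeries.C (σ := Fin 2) (R := K) 4 * X 1 ^ 5 =
      (X 1 : MvPowerSeries (Fin 2) K) ^ 2 * G2 a - 2 * Ca * X 0 * (X 0 * X 1 ^ 3) := by
    rw [G2_eq]
    simp only [map_ofNat]
    ring
  rw [heq]; exact hmem

end Members

end X9

namespace X9

variable {K : Type} [Field K]

/-- the part of `f` with `x`-degree ≥ 5, divided by `x^5` -/
noncomputable def tailX (f : MvPowerSeries (Fin 2) K) : MvPowerSeries (Fin 2) K :=
  fun m => c (m 0 + 5) (m 1) f

/-- contribution of monomials `x^k y^j`, `j ≥ 5 - k`, divided by `x^k y^(5-k)` -/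
noncomputable def tailY (k : ℕ) (f : MvPowerSeries (Fin 2) K) : MvPowerSeries (Fin 2) K :=
  fun m => if m 0 = 0 then c k (m 1 + (5 - k)) f else 0

lemma c_tailX (i j : ℕ) (f : MvPowerSeries (Fin 2) K) :
    c i j (tailX f) = c (i + 5) j f := by
  have h : c i j (tailX f) = c (E i j 0 + 5) (E i j 1) f := rfl
  rw [h, E_apply0, E_apply1]

lemma c_tailY (k i j : ℕ) (f : MvPowerSeries (Fin 2) K) :
    c i j (tailY k f) = if i = 0 then c k (j + (5 - k)) f else 0 := by
  have h : c i j (tailY k f) =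
      if E i j 0 = 0 then c k (E i j 1 + (5 - k)) f else 0 := rfl
  rw [h, E_apply0, E_apply1]

/-- the truncation of `f` in degrees ≤ 4 -/
noncomputable def TT (f : MvPowerSeries (Fin 2) K) : MvPowerSeries (Fin 2) K :=
  M 0 0 (c 0 0 f) + M 1 0 (c 1 0 f) + M 0 1 (c 0 1 f) +
  M 2 0 (c 2 0 f) + M 1 1 (c 1 1 f) + M 0 2 (c 0 2 f) +
  M 3 0 (c 3 0 f) + M 2 1 (c 2 1 f) + M 1 2 (c 1 2 f) + M 0 3 (c 0 3 f) +
  M 4 0 (c 4 0 f) + M 3 1 (c 3 1 f) + M 2 2 (c 2 2 f) + M 1 3 (c 1 3 f) + M 0 4 (c 0 4 f)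

lemma decomp (f : MvPowerSeries (Fin 2) K) :
    f = TT f + M 5 0 1 * tailX f + M 4 1 1 * tailY 4 f + M 3 2 1 * tailY 3 f +
      M 2 3 1 * tailY 2 f + M 1 4 1 * tailY 1 f + M 0 5 1 * tailY 0 f := by
  apply ext_c
  intro i j
  simp only [TT, c_add, c_M, c_M_mul, one_mul, c_tailX, c_tailY]
  by_cases hi5 : 5 ≤ i
  · obtain ⟨i', rfl⟩ : ∃ i', i = i' + 5 := ⟨i - 5, by omega⟩
    simp +arith +decide
  · have hi : i ≤ 4 := by omega
    by_cases hij : i + j ≤ 4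
    · have hj : j ≤ 4 := by omega
      interval_cases i <;> interval_cases j <;> norm_num
    · have hj : 5 - i ≤ j := by omega
      obtain ⟨j', rfl⟩ : ∃ j', j = j' + (5 - i) := ⟨j - (5 - i), by omega⟩
      interval_cases i <;> simp +arith +decide

end X9

namespace X9

variable {K : Type} [Field K]

lemma c_mul_M (i j u v : ℕ) (r : K) (h : MvPowerSeries (Fin 2) K) :
    c i j (h * M u v r) = if u ≤ i ∧ v ≤ j then r * c (i - u) (j - v) h else 0 := by
  rw [mul_comm, c_M_mul]

section Members2

variable {a : K} (h2 : (2 : K) ≠ 0) (ha : a ^ 2 ≠ 4)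

local notation "JJ" => Ideal.span ({G1 a, G2 a} : Set (MvPowerSeries (Fin 2) K))
local notation "Ca" => MvPowerSeries.C (σ := Fin 2) (R := K) a
local notation "CC" => MvPowerSeries.C (σ := Fin 2) (R := K)

include h2 ha in
lemma TT_mem (f : MvPowerSeries (Fin 2) K)
    (h00 : c 0 0 f = 0) (h10 : c 1 0 f = 0) (h01 : c 0 1 f = 0)
    (h20 : c 2 0 f = 0) (h11 : c 1 1 f = 0) (h02 : c 0 2 f = 0)
    (e7 : 2 * c 2 1 f = a * c 0 3 f) (e8 : 2 * c 1 2 f = a * c 3 0 f)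
    (e9 : 2 * c 2 2 f = a * (c 4 0 f + c 0 4 f)) :
    TT f ∈ JJ := by
  have hd : (4 : K) * (4 - a ^ 2) ≠ 0 := by
    intro h
    rcases mul_eq_zero.mp h with h' | h'
    · exact h2 (by rcases mul_eq_zero.mp (show (2:K)*2 = 0 by linear_combination h') with h'' | h'' <;> exact h'')
    · exact hd8 h2 ha (by linear_combination 2 * h')
  apply mem_of_C_mul_mem hd
  rw [Ideal.mem_span_pair]
  refine ⟨(4 - Ca ^ 2) * CC (c 3 0 f) + (4 - Ca ^ 2) * CC (c 4 0 f) * X 0 +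
      (4 * CC (c 3 1 f) - 2 * Ca * CC (c 1 3 f)) * X 1,
    (4 - Ca ^ 2) * CC (c 0 3 f) + (4 * CC (c 1 3 f) - 2 * Ca * CC (c 3 1 f)) * X 0 +
      (4 - Ca ^ 2) * CC (c 0 4 f) * X 1, ?_⟩
  have E7 : (2 : MvPowerSeries (Fin 2) K) * CC (c 2 1 f) = Ca * CC (c 0 3 f) := by
    have := congrArg CC e7
    simpa only [map_mul, map_ofNat] using this
  have E8 : (2 : MvPowerSeries (Fin 2) K) * CC (c 1 2 f) = Ca * CC (c 3 0 f) := by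
    have := congrArg CC e8
    simpa only [map_mul, map_ofNat] using this
  have E9 : (2 : MvPowerSeries (Fin 2) K) * CC (c 2 2 f) =
      Ca * (CC (c 4 0 f) + CC (c 0 4 f)) := by
    have := congrArg CC e9
    simpa only [map_mul, map_add, map_ofNat] using this
  rw [G1_eq, G2_eq]
  simp only [TT, h00, h10, h01, h20, h11, h02, map_zero, zero_add, add_zero, M_eq,
    map_mul, map_sub, map_ofNat, map_pow, pow_zero, mul_one]
  linear_combination (-(2 * (4 - Ca ^ 2) * X 0 ^ 2 * X 1)) * E7 +
    (-(2 * (4 - Ca ^ 2) * X 0 * X 1 ^ 2)) * E8 + (-(2 * (4 - Ca ^ 2) * X 0 ^ 2 * X 1 ^ 2)) * E9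

lemma M_one_eq (u v : ℕ) : (M u v 1 : MvPowerSeries (Fin 2) K) = X 0 ^ u * X 1 ^ v := by
  rw [M_eq, map_one, one_mul]

include h2 ha in
lemma mem_J (f : MvPowerSeries (Fin 2) K)
    (h00 : c 0 0 f = 0) (h10 : c 1 0 f = 0) (h01 : c 0 1 f = 0)
    (h20 : c 2 0 f = 0) (h11 : c 1 1 f = 0) (h02 : c 0 2 f = 0)
    (e7 : 2 * c 2 1 f = a * c 0 3 f) (e8 : 2 * c 1 2 f = a * c 3 0 f)
    (e9 : 2 * c 2 2 f = a * (c 4 0 f + c 0 4 f)) :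
    f ∈ JJ := by
  have hmem : TT f + M 5 0 1 * tailX f + M 4 1 1 * tailY 4 f + M 3 2 1 * tailY 3 f +
      M 2 3 1 * tailY 2 f + M 1 4 1 * tailY 1 f + M 0 5 1 * tailY 0 f ∈ JJ := by
    refine Ideal.add_mem _ (Ideal.add_mem _ (Ideal.add_mem _ (Ideal.add_mem _
      (Ideal.add_mem _ (Ideal.add_mem _ ?_ ?_) ?_) ?_) ?_) ?_) ?_
    · exact TT_mem h2 ha f h00 h10 h01 h20 h11 h02 e7 e8 e9
    · rw [M_one_eq]
      refine Ideal.mul_mem_right _ _ ?_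
      have := hm50 h2 ha
      rwa [show (X 0 : MvPowerSeries (Fin 2) K) ^ 5 = X 0 ^ 5 * X 1 ^ 0 from by ring] at this
    · rw [M_one_eq]
      exact Ideal.mul_mem_right _ _ (by
        have := hm41 h2 ha
        rwa [show (X 0 : MvPowerSeries (Fin 2) K) ^ 4 * X 1 = X 0 ^ 4 * X 1 ^ 1 from by
          ring] at this)
    · rw [M_one_eq]
      exact Ideal.mul_mem_right _ _ (hm32 h2 ha)
    · rw [M_one_eq]
      exact Ideal.mul_mem_right _ _ (hm23 h2 ha)
    · rw [M_one_eq]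
      exact Ideal.mul_mem_right _ _ (by
        have := hm14 h2 ha
        rwa [show (X 0 : MvPowerSeries (Fin 2) K) * X 1 ^ 4 = X 0 ^ 1 * X 1 ^ 4 from by
          ring] at this)
    · rw [M_one_eq]
      exact Ideal.mul_mem_right _ _ (by
        have := hm05 h2 ha
        rwa [show (X 1 : MvPowerSeries (Fin 2) K) ^ 5 = X 0 ^ 0 * X 1 ^ 5 from by ring] at this)
  rwa [← decomp f] at hmem

end Members2

section Conds

variable {a : K}

local notation "JJ" => Ideal.span ({G1 a, G2 a} : Set (MvPowerSeries (Fin 2) K))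

lemma conds_of_mem {f : MvPowerSeries (Fin 2) K} (hf : f ∈ JJ) :
    c 0 0 f = 0 ∧ c 1 0 f = 0 ∧ c 0 1 f = 0 ∧ c 2 0 f = 0 ∧ c 1 1 f = 0 ∧ c 0 2 f = 0 ∧
    2 * c 2 1 f = a * c 0 3 f ∧ 2 * c 1 2 f = a * c 3 0 f ∧
    2 * c 2 2 f = a * (c 4 0 f + c 0 4 f) := by
  rw [Ideal.mem_span_pair] at hf
  obtain ⟨p, q, rfl⟩ := hf
  refine ⟨?_, ?_, ?_, ?_, ?_, ?_, ?_, ?_, ?_⟩ <;>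
    · simp only [G1, G2, mul_add, c_add, c_mul_M]
      norm_num
      try ring

end Conds

end X9

namespace X9

variable {K : Type} [Field K]

/-- the linear map sending coordinates to the combination of the 9 basis monomials -/
noncomputable def sLM : (Fin 9 → K) →ₗ[K] MvPowerSeries (Fin 2) K :=
  (MvPowerSeries.monomial (R := K) (E 0 0)).comp (LinearMap.proj 0) +
  (MvPowerSeries.monomial (R := K) (E 1 0)).comp (LinearMap.proj 1) +
  (MvPowerSeries.monomial (R := K) (E 0 1)).comp (LinearMap.proj 2) +
  (MvPowerSeries.monomial (R := K) (E 2 0)).comp (LinearMap.proj 3) +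
  (MvPowerSeries.monomial (R := K) (E 1 1)).comp (LinearMap.proj 4) +
  (MvPowerSeries.monomial (R := K) (E 0 2)).comp (LinearMap.proj 5) +
  (MvPowerSeries.monomial (R := K) (E 2 1)).comp (LinearMap.proj 6) +
  (MvPowerSeries.monomial (R := K) (E 1 2)).comp (LinearMap.proj 7) +
  (MvPowerSeries.monomial (R := K) (E 2 2)).comp (LinearMap.proj 8)

lemma sLM_apply (v : Fin 9 → K) :
    sLM v = M 0 0 (v 0) + M 1 0 (v 1) + M 0 1 (v 2) + M 2 0 (v 3) + M 1 1 (v 4) +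
      M 0 2 (v 5) + M 2 1 (v 6) + M 1 2 (v 7) + M 2 2 (v 8) := rfl

lemma sLM_vec (v0 v1 v2 v3 v4 v5 v6 v7 v8 : K) :
    sLM ![v0, v1, v2, v3, v4, v5, v6, v7, v8] = M 0 0 v0 + M 1 0 v1 + M 0 1 v2 +
      M 2 0 v3 + M 1 1 v4 + M 0 2 v5 + M 2 1 v6 + M 1 2 v7 + M 2 2 v8 := rfl

lemma c_sub (i j : ℕ) (x y : MvPowerSeries (Fin 2) K) :
    c i j (x - y) = c i j x - c i j y := map_sub _ _ _

end X9

open X9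

theorem stmt4 (K : Type) [Field K] (p : ℕ) [CharP K p] (hp : 3 < p) (a : K)
    (ha : a ^ 2 ≠ 4) :
    milnor K (X (0 : Fin 2) ^ 4 + X 1 ^ 4 + C (σ := Fin 2) (R := K) a * X 0 ^ 2 * X 1 ^ 2) = 9 := by
  classical
  have hp' : p.Prime := (CharP.char_is_prime_or_zero K p).resolve_right (by omega)
  have h2 : (2 : K) ≠ 0 := by
    have h2' : ((2 : ℕ) : K) ≠ 0 := by
      rw [Ne, CharP.cast_eq_zero_iff K p]
      intro hdvd
      have := Nat.le_of_dvd (by norm_num) hdvd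
      omega
    simpa using h2'
  have hrange : (Set.range fun i : Fin 2 => pd i (Fa a)) =
      ({G1 a, G2 a} : Set (MvPowerSeries (Fin 2) K)) := by
    ext g
    simp [Fin.exists_fin_two, pd0_Fa, pd1_Fa, eq_comm]
  unfold milnor
  rw [Fa_eq, hrange]
  set J : Ideal (MvPowerSeries (Fin 2) K) := Ideal.span {G1 a, G2 a} with hJ
  let φ : (Fin 9 → K) →ₗ[K] (MvPowerSeries (Fin 2) K ⧸ J) :=
    (Ideal.Quotient.mkₐ K J).toLinearMap.comp sLM
  have hφ : ∀ v, φ v = Ideal.Quotient.mk J (sLM v) := fun v => rfl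
  have hinj : Function.Injective φ := by
    rw [← LinearMap.ker_eq_bot]
    rw [LinearMap.ker_eq_bot']
    intro v hv
    have hmem : sLM v ∈ J := by
      rw [← Ideal.Quotient.eq_zero_iff_mem]
      exact hv
    obtain ⟨q1, q2, q3, q4, q5, q6, q7, q8, q9⟩ := conds_of_mem hmem
    simp only [sLM_apply, c_add, c_M] at q1 q2 q3 q4 q5 q6 q7 q8 q9
    norm_num at q1 q2 q3 q4 q5 q6 q7 q8 q9
    funext k
    fin_cases k <;> simp only [Pi.zero_apply] <;>
      first
        | assumption
        | exact q7.resolve_left h2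
        | exact q8.resolve_left h2
        | exact q9.resolve_left h2
  have hsurj : Function.Surjective φ := by
    intro x
    obtain ⟨f, rfl⟩ := Ideal.Quotient.mk_surjective x
    refine ⟨![c 0 0 f, c 1 0 f, c 0 1 f, c 2 0 f, c 1 1 f, c 0 2 f,
      c 2 1 f - a * c 0 3 f / 2, c 1 2 f - a * c 3 0 f / 2,
      c 2 2 f - a * (c 4 0 f + c 0 4 f) / 2], ?_⟩
    rw [hφ, Ideal.Quotient.mk_eq_mk_iff_sub_mem, sLM_vec]
    apply mem_J h2 ha <;>
      simp only [c_sub, c_add, c_M] <;>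
      norm_num <;>
      (rw [mul_comm, div_mul_cancel₀ _ h2]; try ring)
  have e : (Fin 9 → K) ≃ₗ[K] (MvPowerSeries (Fin 2) K ⧸ J) :=
    LinearEquiv.ofBijective φ ⟨hinj, hsurj⟩
  rw [← LinearEquiv.finrank_eq e, Module.finrank_fin_fun]
end

section
/- Let K be a field of characteristic p > 3 and f = x^3 + y^3 + z^3 + a x y z ∈ K[[x,y,z]] with a^3 + 27 ≠ 0. Then μ(f) = 8. -/
open MvPowerSeries

namespace Stmt6Aux

noncomputable def md (i j k : ℕ) : Fin 3 →₀ ℕ := Finsupp.equivFunOnFinite.symm ![i, j, k]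

@[simp] lemma md_apply0 (i j k : ℕ) : md i j k 0 = i := rfl
@[simp] lemma md_apply1 (i j k : ℕ) : md i j k 1 = j := rfl
@[simp] lemma md_apply2 (i j k : ℕ) : md i j k 2 = k := rfl

lemma eq_md (d : Fin 3 →₀ ℕ) : d = md (d 0) (d 1) (d 2) := by
  ext x
  fin_cases x <;> rfl

@[simp] lemma md_eq_iff {i j k i' j' k' : ℕ} :
    md i j k = md i' j' k' ↔ i = i' ∧ j = j' ∧ k = k' := by
  constructor
  · intro h
    exact ⟨by rw [← md_apply0 i j k, h, md_apply0], by rw [← md_apply1 i j k, h, md_apply1],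
      by rw [← md_apply2 i j k, h, md_apply2]⟩
  · rintro ⟨rfl, rfl, rfl⟩; rfl

@[simp] lemma md_add (i j k i' j' k' : ℕ) :
    md i j k + md i' j' k' = md (i + i') (j + j') (k + k') := by
  ext x; fin_cases x <;> simp [Finsupp.add_apply]

@[simp] lemma md_le_iff {i j k : ℕ} {d : Fin 3 →₀ ℕ} :
    md i j k ≤ d ↔ i ≤ d 0 ∧ j ≤ d 1 ∧ k ≤ d 2 := by
  rw [Finsupp.le_def]
  constructor
  · intro h; exact ⟨h 0, h 1, h 2⟩
  · rintro ⟨h1, h2, h3⟩ x; fin_cases x <;> assumption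

@[simp] lemma md_zero : md 0 0 0 = 0 := by
  ext x; fin_cases x <;> rfl

lemma single_eq_md0 (n : ℕ) : Finsupp.single (0 : Fin 3) n = md n 0 0 := by
  ext x; fin_cases x <;> simp [Finsupp.single_apply, md]
lemma single_eq_md1 (n : ℕ) : Finsupp.single (1 : Fin 3) n = md 0 n 0 := by
  ext x; fin_cases x <;> simp [Finsupp.single_apply, md]
lemma single_eq_md2 (n : ℕ) : Finsupp.single (2 : Fin 3) n = md 0 0 n := by
  ext x; fin_cases x <;> simp [Finsupp.single_apply, md]

section PD
variable {K : Type} [Field K]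

noncomputable def F (a : K) : MvPowerSeries (Fin 3) K :=
  X (0 : Fin 3) ^ 3 + X 1 ^ 3 + X 2 ^ 3 + C (σ := Fin 3) (R := K) a * X 0 * X 1 * X 2

lemma monomial_eq_X (i j k : ℕ) (c : K) :
    monomial (R := K) (md i j k) c = C (σ := Fin 3) (R := K) c * X 0 ^ i * X 1 ^ j * X 2 ^ k := by
  rw [X_pow_eq, X_pow_eq, X_pow_eq, single_eq_md0, single_eq_md1, single_eq_md2]
  rw [show (C (σ := Fin 3) (R := K) c) = monomial (R := K) (md 0 0 0) c by rw [md_zero, monomial_zero_eq_C_apply]]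
  simp only [monomial_mul_monomial, md_add]
  norm_num

lemma F_eq (a : K) : F a = monomial (R := K) (md 3 0 0) 1 + monomial (R := K) (md 0 3 0) 1
    + monomial (R := K) (md 0 0 3) 1 + monomial (R := K) (md 1 1 1) a := by
  rw [monomial_eq_X, monomial_eq_X, monomial_eq_X, monomial_eq_X, F]
  push_cast [map_one]
  ring

lemma coeff_F (a : K) (m : Fin 3 →₀ ℕ) :
    coeff (R := K) m (F a) = (if m = md 3 0 0 then (1:K) else 0) + (if m = md 0 3 0 then 1 else 0)
      + (if m = md 0 0 3 then 1 else 0) + (if m = md 1 1 1 then a else 0) := by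
  classical
  rw [F_eq]
  simp [coeff_monomial]

lemma pd_apply (i : Fin 3) (f : MvPowerSeries (Fin 3) K) (m : Fin 3 →₀ ℕ) :
    coeff (R := K) m (pd i f) = ((m i + 1 : ℕ) : K) * coeff (R := K) (m + Finsupp.single i 1) f := rfl

lemma pd0_F (a : K) : pd 0 (F a) = monomial (R := K) (md 2 0 0) 3 + monomial (R := K) (md 0 1 1) a := by
  classical
  ext m
  rw [pd_apply, map_add, coeff_monomial, coeff_monomial]
  rw [eq_md m, single_eq_md0, md_add, coeff_F]
  simp only [md_apply0, md_eq_iff]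
  split_ifs <;> push_cast <;> simp_all <;> first | omega | norm_num | ring

lemma pd1_F (a : K) : pd 1 (F a) = monomial (R := K) (md 0 2 0) 3 + monomial (R := K) (md 1 0 1) a := by
  classical
  ext m
  rw [pd_apply, map_add, coeff_monomial, coeff_monomial]
  rw [eq_md m, single_eq_md1, md_add, coeff_F]
  simp only [md_apply1, md_eq_iff]
  split_ifs <;> push_cast <;> simp_all <;> first | omega | norm_num

lemma pd2_F (a : K) : pd 2 (F a) = monomial (R := K) (md 0 0 2) 3 + monomial (R := K) (md 1 1 0) a := by
  classical
  ext m
  rw [pd_apply, map_add, coeff_monomial, coeff_monomial]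
  rw [eq_md m, single_eq_md2, md_add, coeff_F]
  simp only [md_apply2, md_eq_iff]
  split_ifs <;> push_cast <;> simp_all <;> first | omega | norm_num

lemma pd0_FX (a : K) : pd 0 (F a) = C (σ := Fin 3) (R := K) 3 * X 0 ^ 2 + C (σ := Fin 3) (R := K) a * (X 1 * X 2) := by
  rw [pd0_F, monomial_eq_X, monomial_eq_X]; ring

lemma pd1_FX (a : K) : pd 1 (F a) = C (σ := Fin 3) (R := K) 3 * X 1 ^ 2 + C (σ := Fin 3) (R := K) a * (X 0 * X 2) := by
  rw [pd1_F, monomial_eq_X, monomial_eq_X]; ring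

lemma pd2_FX (a : K) : pd 2 (F a) = C (σ := Fin 3) (R := K) 3 * X 2 ^ 2 + C (σ := Fin 3) (R := K) a * (X 0 * X 1) := by
  rw [pd2_F, monomial_eq_X, monomial_eq_X]; ring

end PD

section Jsec
variable {K : Type} [Field K]

noncomputable def J (a : K) : Ideal (MvPowerSeries (Fin 3) K) :=
  Ideal.span (Set.range fun i => pd i (F a))

lemma pd_mem (a : K) (i : Fin 3) : pd i (F a) ∈ J a := Ideal.subset_span ⟨i, rfl⟩

lemma mem_of_C_mul {a c : K} (hc : c ≠ 0) {w : MvPowerSeries (Fin 3) K}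
    (h : C (σ := Fin 3) (R := K) c * w ∈ J a) : w ∈ J a := by
  have hw : w = C (σ := Fin 3) (R := K) c⁻¹ * (C (σ := Fin 3) (R := K) c * w) := by
    rw [← mul_assoc, ← map_mul, inv_mul_cancel₀ hc, map_one, one_mul]
  rw [hw]; exact Ideal.mul_mem_left _ _ h

lemma g211 {a : K} (hD : 27 + a ^ 3 ≠ 0) (h : MvPowerSeries (Fin 3) K) :
    monomial (R := K) (md 2 1 1) 1 * h ∈ J a := by
  apply mem_of_C_mul hD
  have key : C (σ := Fin 3) (R := K) (27 + a ^ 3) * (monomial (R := K) (md 2 1 1) 1 * h) = (C (σ := Fin 3) (R := K) (9:K) * (X 1 * X 2) * h) * pd 0 (F a) + (C (σ := Fin 3) (R := K) (-(3*a)) * (X 2 ^ 2) * h) * pd 1 (F a) + (C (σ := Fin 3) (R := K) (a^2) * (X 0 * X 2) * h) * pd 2 (F a) := by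
    rw [pd0_FX, pd1_FX, pd2_FX, monomial_eq_X]
    simp only [map_add, map_mul, map_pow, map_neg, map_ofNat, map_one]
    ring
  rw [key]
  exact add_mem (add_mem (Ideal.mul_mem_left _ _ (pd_mem a 0)) (Ideal.mul_mem_left _ _ (pd_mem a 1)))
    (Ideal.mul_mem_left _ _ (pd_mem a 2))

lemma g121 {a : K} (hD : 27 + a ^ 3 ≠ 0) (h : MvPowerSeries (Fin 3) K) :
    monomial (R := K) (md 1 2 1) 1 * h ∈ J a := by
  apply mem_of_C_mul hD
  have key : C (σ := Fin 3) (R := K) (27 + a ^ 3) * (monomial (R := K) (md 1 2 1) 1 * h) = (C (σ := Fin 3) (R := K) (9:K) * (X 0 * X 2) * h) * pd 1 (F a) + (C (σ := Fin 3) (R := K) (-(3*a)) * (X 2 ^ 2) * h) * pd 0 (F a) + (C (σ := Fin 3) (R := K) (a^2) * (X 1 * X 2) * h) * pd 2 (F a) := by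
    rw [pd0_FX, pd1_FX, pd2_FX, monomial_eq_X]
    simp only [map_add, map_mul, map_pow, map_neg, map_ofNat, map_one]
    ring
  rw [key]
  exact add_mem (add_mem (Ideal.mul_mem_left _ _ (pd_mem a 1)) (Ideal.mul_mem_left _ _ (pd_mem a 0)))
    (Ideal.mul_mem_left _ _ (pd_mem a 2))

lemma g112 {a : K} (hD : 27 + a ^ 3 ≠ 0) (h : MvPowerSeries (Fin 3) K) :
    monomial (R := K) (md 1 1 2) 1 * h ∈ J a := by
  apply mem_of_C_mul hD
  have key : C (σ := Fin 3) (R := K) (27 + a ^ 3) * (monomial (R := K) (md 1 1 2) 1 * h) = (C (σ := Fin 3) (R := K) (9:K) * (X 0 * X 1) * h) * pd 2 (F a) + (C (σ := Fin 3) (R := K) (-(3*a)) * (X 0 ^ 2) * h) * pd 1 (F a) + (C (σ := Fin 3) (R := K) (a^2) * (X 0 * X 2) * h) * pd 0 (F a) := by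
    rw [pd0_FX, pd1_FX, pd2_FX, monomial_eq_X]
    simp only [map_add, map_mul, map_pow, map_neg, map_ofNat, map_one]
    ring
  rw [key]
  exact add_mem (add_mem (Ideal.mul_mem_left _ _ (pd_mem a 2)) (Ideal.mul_mem_left _ _ (pd_mem a 1)))
    (Ideal.mul_mem_left _ _ (pd_mem a 0))

lemma g220 {a : K} (hD : 27 + a ^ 3 ≠ 0) (h : MvPowerSeries (Fin 3) K) :
    monomial (R := K) (md 2 2 0) 1 * h ∈ J a := by
  apply mem_of_C_mul hD
  have key : C (σ := Fin 3) (R := K) (27 + a ^ 3) * (monomial (R := K) (md 2 2 0) 1 * h) = (C (σ := Fin 3) (R := K) (9:K) * (X 1 ^ 2) * h) * pd 0 (F a) + (C (σ := Fin 3) (R := K) (-(3*a)) * (X 1 * X 2) * h) * pd 1 (F a) + (C (σ := Fin 3) (R := K) (a^2) * (X 0 * X 1) * h) * pd 2 (F a) := by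
    rw [pd0_FX, pd1_FX, pd2_FX, monomial_eq_X]
    simp only [map_add, map_mul, map_pow, map_neg, map_ofNat, map_one]
    ring
  rw [key]
  exact add_mem (add_mem (Ideal.mul_mem_left _ _ (pd_mem a 0)) (Ideal.mul_mem_left _ _ (pd_mem a 1)))
    (Ideal.mul_mem_left _ _ (pd_mem a 2))

lemma g022 {a : K} (hD : 27 + a ^ 3 ≠ 0) (h : MvPowerSeries (Fin 3) K) :
    monomial (R := K) (md 0 2 2) 1 * h ∈ J a := by
  apply mem_of_C_mul hD
  have key : C (σ := Fin 3) (R := K) (27 + a ^ 3) * (monomial (R := K) (md 0 2 2) 1 * h) = (C (σ := Fin 3) (R := K) (9:K) * (X 2 ^ 2) * h) * pd 1 (F a) + (C (σ := Fin 3) (R := K) (-(3*a)) * (X 0 * X 2) * h) * pd 2 (F a) + (C (σ := Fin 3) (R := K) (a^2) * (X 1 * X 2) * h) * pd 0 (F a) := by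
    rw [pd0_FX, pd1_FX, pd2_FX, monomial_eq_X]
    simp only [map_add, map_mul, map_pow, map_neg, map_ofNat, map_one]
    ring
  rw [key]
  exact add_mem (add_mem (Ideal.mul_mem_left _ _ (pd_mem a 1)) (Ideal.mul_mem_left _ _ (pd_mem a 2)))
    (Ideal.mul_mem_left _ _ (pd_mem a 0))

lemma g202 {a : K} (hD : 27 + a ^ 3 ≠ 0) (h : MvPowerSeries (Fin 3) K) :
    monomial (R := K) (md 2 0 2) 1 * h ∈ J a := by
  apply mem_of_C_mul hD
  have key : C (σ := Fin 3) (R := K) (27 + a ^ 3) * (monomial (R := K) (md 2 0 2) 1 * h) = (C (σ := Fin 3) (R := K) (9:K) * (X 0 ^ 2) * h) * pd 2 (F a) + (C (σ := Fin 3) (R := K) (-(3*a)) * (X 0 * X 1) * h) * pd 0 (F a) + (C (σ := Fin 3) (R := K) (a^2) * (X 0 * X 2) * h) * pd 1 (F a) := by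
    rw [pd0_FX, pd1_FX, pd2_FX, monomial_eq_X]
    simp only [map_add, map_mul, map_pow, map_neg, map_ofNat, map_one]
    ring
  rw [key]
  exact add_mem (add_mem (Ideal.mul_mem_left _ _ (pd_mem a 2)) (Ideal.mul_mem_left _ _ (pd_mem a 0)))
    (Ideal.mul_mem_left _ _ (pd_mem a 1))

lemma m400 {a : K} (h3 : (3:K) ≠ 0) (hD : 27 + a ^ 3 ≠ 0) (h : MvPowerSeries (Fin 3) K) :
    monomial (R := K) (md 4 0 0) 1 * h ∈ J a := by
  apply mem_of_C_mul h3
  have key : C (σ := Fin 3) (R := K) 3 * (monomial (R := K) (md 4 0 0) 1 * h) =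
      ((X 0 ^ 2) * h) * pd 0 (F a) + C (σ := Fin 3) (R := K) (-a) * (monomial (R := K) (md 2 1 1) 1 * h) := by
    rw [pd0_FX, monomial_eq_X, monomial_eq_X]
    simp only [map_add, map_mul, map_pow, map_neg, map_ofNat, map_one]
    ring
  rw [key]
  exact add_mem (Ideal.mul_mem_left _ _ (pd_mem a 0)) (Ideal.mul_mem_left _ _ (g211 hD h))

lemma m040 {a : K} (h3 : (3:K) ≠ 0) (hD : 27 + a ^ 3 ≠ 0) (h : MvPowerSeries (Fin 3) K) :
    monomial (R := K) (md 0 4 0) 1 * h ∈ J a := by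
  apply mem_of_C_mul h3
  have key : C (σ := Fin 3) (R := K) 3 * (monomial (R := K) (md 0 4 0) 1 * h) =
      ((X 1 ^ 2) * h) * pd 1 (F a) + C (σ := Fin 3) (R := K) (-a) * (monomial (R := K) (md 1 2 1) 1 * h) := by
    rw [pd1_FX, monomial_eq_X, monomial_eq_X]
    simp only [map_add, map_mul, map_pow, map_neg, map_ofNat, map_one]
    ring
  rw [key]
  exact add_mem (Ideal.mul_mem_left _ _ (pd_mem a 1)) (Ideal.mul_mem_left _ _ (g121 hD h))

lemma m004 {a : K} (h3 : (3:K) ≠ 0) (hD : 27 + a ^ 3 ≠ 0) (h : MvPowerSeries (Fin 3) K) :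
    monomial (R := K) (md 0 0 4) 1 * h ∈ J a := by
  apply mem_of_C_mul h3
  have key : C (σ := Fin 3) (R := K) 3 * (monomial (R := K) (md 0 0 4) 1 * h) =
      ((X 2 ^ 2) * h) * pd 2 (F a) + C (σ := Fin 3) (R := K) (-a) * (monomial (R := K) (md 1 1 2) 1 * h) := by
    rw [pd2_FX, monomial_eq_X, monomial_eq_X]
    simp only [map_add, map_mul, map_pow, map_neg, map_ofNat, map_one]
    ring
  rw [key]
  exact add_mem (Ideal.mul_mem_left _ _ (pd_mem a 2)) (Ideal.mul_mem_left _ _ (g112 hD h))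

lemma m310 {a : K} (h3 : (3:K) ≠ 0) (hD : 27 + a ^ 3 ≠ 0) (h : MvPowerSeries (Fin 3) K) :
    monomial (R := K) (md 3 1 0) 1 * h ∈ J a := by
  apply mem_of_C_mul h3
  have key : C (σ := Fin 3) (R := K) 3 * (monomial (R := K) (md 3 1 0) 1 * h) =
      ((X 0 * X 1) * h) * pd 0 (F a) + C (σ := Fin 3) (R := K) (-a) * (monomial (R := K) (md 1 2 1) 1 * h) := by
    rw [pd0_FX, monomial_eq_X, monomial_eq_X]
    simp only [map_add, map_mul, map_pow, map_neg, map_ofNat, map_one]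
    ring
  rw [key]
  exact add_mem (Ideal.mul_mem_left _ _ (pd_mem a 0)) (Ideal.mul_mem_left _ _ (g121 hD h))

lemma m301 {a : K} (h3 : (3:K) ≠ 0) (hD : 27 + a ^ 3 ≠ 0) (h : MvPowerSeries (Fin 3) K) :
    monomial (R := K) (md 3 0 1) 1 * h ∈ J a := by
  apply mem_of_C_mul h3
  have key : C (σ := Fin 3) (R := K) 3 * (monomial (R := K) (md 3 0 1) 1 * h) =
      ((X 0 * X 2) * h) * pd 0 (F a) + C (σ := Fin 3) (R := K) (-a) * (monomial (R := K) (md 1 1 2) 1 * h) := by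
    rw [pd0_FX, monomial_eq_X, monomial_eq_X]
    simp only [map_add, map_mul, map_pow, map_neg, map_ofNat, map_one]
    ring
  rw [key]
  exact add_mem (Ideal.mul_mem_left _ _ (pd_mem a 0)) (Ideal.mul_mem_left _ _ (g112 hD h))

lemma m130 {a : K} (h3 : (3:K) ≠ 0) (hD : 27 + a ^ 3 ≠ 0) (h : MvPowerSeries (Fin 3) K) :
    monomial (R := K) (md 1 3 0) 1 * h ∈ J a := by
  apply mem_of_C_mul h3
  have key : C (σ := Fin 3) (R := K) 3 * (monomial (R := K) (md 1 3 0) 1 * h) =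
      ((X 0 * X 1) * h) * pd 1 (F a) + C (σ := Fin 3) (R := K) (-a) * (monomial (R := K) (md 2 1 1) 1 * h) := by
    rw [pd1_FX, monomial_eq_X, monomial_eq_X]
    simp only [map_add, map_mul, map_pow, map_neg, map_ofNat, map_one]
    ring
  rw [key]
  exact add_mem (Ideal.mul_mem_left _ _ (pd_mem a 1)) (Ideal.mul_mem_left _ _ (g211 hD h))

lemma m031 {a : K} (h3 : (3:K) ≠ 0) (hD : 27 + a ^ 3 ≠ 0) (h : MvPowerSeries (Fin 3) K) :
    monomial (R := K) (md 0 3 1) 1 * h ∈ J a := by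
  apply mem_of_C_mul h3
  have key : C (σ := Fin 3) (R := K) 3 * (monomial (R := K) (md 0 3 1) 1 * h) =
      ((X 1 * X 2) * h) * pd 1 (F a) + C (σ := Fin 3) (R := K) (-a) * (monomial (R := K) (md 1 1 2) 1 * h) := by
    rw [pd1_FX, monomial_eq_X, monomial_eq_X]
    simp only [map_add, map_mul, map_pow, map_neg, map_ofNat, map_one]
    ring
  rw [key]
  exact add_mem (Ideal.mul_mem_left _ _ (pd_mem a 1)) (Ideal.mul_mem_left _ _ (g112 hD h))

lemma m103 {a : K} (h3 : (3:K) ≠ 0) (hD : 27 + a ^ 3 ≠ 0) (h : MvPowerSeries (Fin 3) K) :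
    monomial (R := K) (md 1 0 3) 1 * h ∈ J a := by
  apply mem_of_C_mul h3
  have key : C (σ := Fin 3) (R := K) 3 * (monomial (R := K) (md 1 0 3) 1 * h) =
      ((X 0 * X 2) * h) * pd 2 (F a) + C (σ := Fin 3) (R := K) (-a) * (monomial (R := K) (md 2 1 1) 1 * h) := by
    rw [pd2_FX, monomial_eq_X, monomial_eq_X]
    simp only [map_add, map_mul, map_pow, map_neg, map_ofNat, map_one]
    ring
  rw [key]
  exact add_mem (Ideal.mul_mem_left _ _ (pd_mem a 2)) (Ideal.mul_mem_left _ _ (g211 hD h))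

lemma m013 {a : K} (h3 : (3:K) ≠ 0) (hD : 27 + a ^ 3 ≠ 0) (h : MvPowerSeries (Fin 3) K) :
    monomial (R := K) (md 0 1 3) 1 * h ∈ J a := by
  apply mem_of_C_mul h3
  have key : C (σ := Fin 3) (R := K) 3 * (monomial (R := K) (md 0 1 3) 1 * h) =
      ((X 1 * X 2) * h) * pd 2 (F a) + C (σ := Fin 3) (R := K) (-a) * (monomial (R := K) (md 1 2 1) 1 * h) := by
    rw [pd2_FX, monomial_eq_X, monomial_eq_X]
    simp only [map_add, map_mul, map_pow, map_neg, map_ofNat, map_one]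
    ring
  rw [key]
  exact add_mem (Ideal.mul_mem_left _ _ (pd_mem a 2)) (Ideal.mul_mem_left _ _ (g121 hD h))

end Jsec


section Split
variable {K : Type} [Field K]

noncomputable def Q : Fin 6 → (Fin 3 →₀ ℕ)
  | 0 => md 2 0 0
  | 1 => md 1 1 0
  | 2 => md 1 0 1
  | 3 => md 0 2 0
  | 4 => md 0 1 1
  | 5 => md 0 0 2

@[simp] lemma Q0 : Q 0 = md 2 0 0 := rfl
@[simp] lemma Q1 : Q 1 = md 1 1 0 := rfl
@[simp] lemma Q2 : Q 2 = md 1 0 1 := rfl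
@[simp] lemma Q3 : Q 3 = md 0 2 0 := rfl
@[simp] lemma Q4 : Q 4 = md 0 1 1 := rfl
@[simp] lemma Q5 : Q 5 = md 0 0 2 := rfl

noncomputable def sel (d : Fin 3 →₀ ℕ) : Fin 6 :=
  if 2 ≤ d 0 then 0 else if 1 ≤ d 0 ∧ 1 ≤ d 1 then 1 else if 1 ≤ d 0 then 2
  else if 2 ≤ d 1 then 3 else if 1 ≤ d 1 then 4 else 5

lemma Q_sel_le (d : Fin 3 →₀ ℕ) (hd : 2 ≤ d 0 + d 1 + d 2) : Q (sel d) ≤ d := by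
  unfold sel
  split_ifs with h1 h2 h3 h4 h5 <;>
    simp only [Q0, Q1, Q2, Q3, Q4, Q5, md_le_iff] <;> omega

noncomputable def part (t : MvPowerSeries (Fin 3) K) (i : Fin 6) : MvPowerSeries (Fin 3) K :=
  fun e => if sel (e + Q i) = i then coeff (R := K) (e + Q i) t else 0

lemma coeff_part (t : MvPowerSeries (Fin 3) K) (i : Fin 6) (e : Fin 3 →₀ ℕ) :
    coeff (R := K) e (part t i) = if sel (e + Q i) = i then coeff (R := K) (e + Q i) t else 0 := rfl

lemma split (t : MvPowerSeries (Fin 3) K) (k : ℕ)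
    (ht : ∀ d : Fin 3 →₀ ℕ, d 0 + d 1 + d 2 < k + 2 → coeff (R := K) d t = 0) :
    t = ∑ i : Fin 6, monomial (R := K) (Q i) 1 * part t i ∧
      ∀ i, ∀ d : Fin 3 →₀ ℕ, d 0 + d 1 + d 2 < k → coeff (R := K) d (part t i) = 0 := by
  constructor
  · ext d
    rw [map_sum]
    have hterm : ∀ i ∈ Finset.univ, coeff (R := K) d (monomial (R := K) (Q i) 1 * part t i)
        = if Q i ≤ d ∧ sel d = i then coeff (R := K) d t else 0 := by
      intro i _
      rw [coeff_monomial_mul]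
      by_cases hq : Q i ≤ d
      · rw [if_pos hq, one_mul, coeff_part, tsub_add_cancel_of_le hq]
        by_cases hs : sel d = i
        · rw [if_pos hs, if_pos ⟨hq, hs⟩]
        · rw [if_neg hs, if_neg (by tauto)]
      · rw [if_neg hq, if_neg (by tauto)]
    rw [Finset.sum_congr rfl hterm]
    by_cases hc : coeff (R := K) d t = 0
    · simp [hc]
    · have hdeg : 2 ≤ d 0 + d 1 + d 2 := by
        by_contra hlt
        exact hc (ht d (by omega))
      rw [Finset.sum_eq_single (sel d)]
      · rw [if_pos ⟨Q_sel_le d hdeg, rfl⟩]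
      · intro j _ hj
        rw [if_neg (by tauto)]
      · intro h; exact absurd (Finset.mem_univ _) h
  · intro i d hd
    rw [coeff_part]
    split_ifs with hs
    · apply ht
      have h0 : (d + Q i) 0 = d 0 + Q i 0 := Finsupp.add_apply d (Q i) 0
      have h1 : (d + Q i) 1 = d 1 + Q i 1 := Finsupp.add_apply d (Q i) 1
      have h2 : (d + Q i) 2 = d 2 + Q i 2 := Finsupp.add_apply d (Q i) 2
      have hq : Q i 0 + Q i 1 + Q i 2 = 2 := by
        fin_cases i <;> rfl
      omega
    · rfl

section MD
attribute [local irreducible] md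

set_option maxHeartbeats 1600000 in
lemma mem4 {K : Type} [Field K] {a : K} (h3 : (3:K) ≠ 0) (hD : 27 + a ^ 3 ≠ 0) (x y z : ℕ)
    (hxyz : x + y + z = 4)
    (h : MvPowerSeries (Fin 3) K) : monomial (R := K) (md x y z) 1 * h ∈ J a := by
  have hx : x ≤ 4 := by omega
  have hy : y ≤ 4 := by omega
  have hz : z ≤ 4 := by omega
  interval_cases x <;> interval_cases y <;> interval_cases z <;> try omega
  · exact m004 h3 hD _
  · exact m013 h3 hD _
  · exact g022 hD _
  · exact m031 h3 hD _
  · exact m040 h3 hD _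
  · exact m103 h3 hD _
  · exact g112 hD _
  · exact g121 hD _
  · exact m130 h3 hD _
  · exact g202 hD _
  · exact g211 hD _
  · exact g220 hD _
  · exact m301 h3 hD _
  · exact m310 h3 hD _
  · exact m400 h3 hD _

end MD


lemma order4_mem {a : K} (h3 : (3:K) ≠ 0) (hD : 27 + a ^ 3 ≠ 0) (r : MvPowerSeries (Fin 3) K)
    (hr : ∀ d : Fin 3 →₀ ℕ, d 0 + d 1 + d 2 < 4 → coeff (R := K) d r = 0) : r ∈ J a := by
  obtain ⟨heq, hord⟩ := split r 2 hr
  rw [heq]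
  refine Submodule.sum_mem _ fun i _ => ?_
  obtain ⟨heq2, -⟩ := split (part r i) 0 (fun d hd => hord i d hd)
  rw [heq2, Finset.mul_sum]
  refine Submodule.sum_mem _ fun j _ => ?_
  rw [← mul_assoc, monomial_mul_monomial, one_mul]
  rw [eq_md (Q i + Q j)]
  apply mem4 h3 hD
  fin_cases i <;> fin_cases j <;> rfl

end Split


section Phi
variable {K : Type} [Field K]

noncomputable def phiC (a : K) : Fin 8 → (MvPowerSeries (Fin 3) K →ₗ[K] K)
  | 0 => coeff (R := K) (md 0 0 0)
  | 1 => coeff (R := K) (md 1 0 0)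
  | 2 => coeff (R := K) (md 0 1 0)
  | 3 => coeff (R := K) (md 0 0 1)
  | 4 => coeff (R := K) (md 1 1 0) - (a/3) • coeff (R := K) (md 0 0 2)
  | 5 => coeff (R := K) (md 0 1 1) - (a/3) • coeff (R := K) (md 2 0 0)
  | 6 => coeff (R := K) (md 1 0 1) - (a/3) • coeff (R := K) (md 0 2 0)
  | 7 => coeff (R := K) (md 1 1 1) - (a/3) • (coeff (R := K) (md 3 0 0) + coeff (R := K) (md 0 3 0) + coeff (R := K) (md 0 0 3))

noncomputable def Phi (a : K) : MvPowerSeries (Fin 3) K →ₗ[K] (Fin 8 → K) :=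
  LinearMap.pi (phiC a)

lemma Phi_apply (a : K) (g : MvPowerSeries (Fin 3) K) (j : Fin 8) :
    Phi a g j = phiC a j g := rfl

noncomputable def bm : Fin 8 → MvPowerSeries (Fin 3) K
  | 0 => monomial (R := K) (md 0 0 0) 1
  | 1 => monomial (R := K) (md 1 0 0) 1
  | 2 => monomial (R := K) (md 0 1 0) 1
  | 3 => monomial (R := K) (md 0 0 1) 1
  | 4 => monomial (R := K) (md 1 1 0) 1
  | 5 => monomial (R := K) (md 0 1 1) 1
  | 6 => monomial (R := K) (md 1 0 1) 1
  | 7 => monomial (R := K) (md 1 1 1) 1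

@[simp] lemma md_sub (i j k i' j' k' : ℕ) :
    md i j k - md i' j' k' = md (i - i') (j - j') (k - k') := by
  ext x; fin_cases x <;> simp [Finsupp.tsub_apply]

lemma md_eq_zero {i j k : ℕ} : md i j k = 0 ↔ i = 0 ∧ j = 0 ∧ k = 0 := by
  rw [← md_zero, md_eq_iff]

lemma zero_eq_md {i j k : ℕ} : 0 = md i j k ↔ i = 0 ∧ j = 0 ∧ k = 0 := by
  rw [eq_comm, md_eq_zero]

set_option maxHeartbeats 1000000 in
lemma Phi_basis (a : K) (j : Fin 8) : Phi a (bm j) = Pi.single j 1 := by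
  funext j'
  rw [Phi_apply]
  fin_cases j <;> fin_cases j' <;>
    simp [phiC, bm, coeff_monomial, coeff_one, Pi.single_apply, md_eq_iff, md_eq_zero, zero_eq_md]

set_option maxHeartbeats 1000000 in
lemma Phi_vanish {a : K} (h3 : (3:K) ≠ 0) {g : MvPowerSeries (Fin 3) K} (hg : g ∈ J a) :
    Phi a g = 0 := by
  rw [J, Ideal.mem_span_range_iff_exists_fun] at hg
  obtain ⟨c, rfl⟩ := hg
  rw [Fin.sum_univ_three]
  funext j
  rw [Phi_apply]
  fin_cases j <;>
    simp only [map_add, phiC, LinearMap.sub_apply, LinearMap.add_apply, LinearMap.smul_apply,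
      pd0_F, pd1_F, pd2_F, mul_add, coeff_mul_monomial, md_le_iff, md_sub, md_apply0, md_apply1,
      md_apply2, Pi.zero_apply, smul_eq_mul] <;>
    norm_num <;> try (field_simp; try ring)

end Phi


section Reduce
variable {K : Type} [Field K]

set_option maxHeartbeats 4000000 in
lemma reduce {a : K} (h3 : (3:K) ≠ 0) (hD : 27 + a ^ 3 ≠ 0) (g : MvPowerSeries (Fin 3) K)
    (hg : Phi a g = 0) : g ∈ J a := by
  have e0 := congrFun hg 0
  have e1 := congrFun hg 1
  have e2 := congrFun hg 2
  have e3 := congrFun hg 3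
  have e4 := congrFun hg 4
  have e5 := congrFun hg 5
  have e6 := congrFun hg 6
  have e7 := congrFun hg 7
  simp only [Phi_apply, phiC, LinearMap.sub_apply, LinearMap.add_apply, LinearMap.smul_apply,
    smul_eq_mul, Pi.zero_apply] at e0 e1 e2 e3 e4 e5 e6 e7
  set D := 27 + a ^ 3 with hDdef
  set W : MvPowerSeries (Fin 3) K :=
    (monomial (R := K) (md 0 0 0) (coeff (R := K) (md 2 0 0) g / 3)
      + monomial (R := K) (md 1 0 0) (coeff (R := K) (md 3 0 0) g / 3)
      + monomial (R := K) (md 0 1 0) ((9 * coeff (R := K) (md 2 1 0) g + a^2 * coeff (R := K) (md 0 2 1) g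
          - 3*a* coeff (R := K) (md 1 0 2) g)/D)
      + monomial (R := K) (md 0 0 1) ((9 * coeff (R := K) (md 2 0 1) g - 3*a* coeff (R := K) (md 1 2 0) g
          + a^2 * coeff (R := K) (md 0 1 2) g)/D)) * pd 0 (F a)
    + (monomial (R := K) (md 0 0 0) (coeff (R := K) (md 0 2 0) g / 3)
      + monomial (R := K) (md 0 1 0) (coeff (R := K) (md 0 3 0) g / 3)
      + monomial (R := K) (md 0 0 1) ((9 * coeff (R := K) (md 0 2 1) g - 3*a* coeff (R := K) (md 2 1 0) g
          + a^2 * coeff (R := K) (md 1 0 2) g)/D)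
      + monomial (R := K) (md 1 0 0) ((9 * coeff (R := K) (md 1 2 0) g - 3*a* coeff (R := K) (md 0 1 2) g
          + a^2 * coeff (R := K) (md 2 0 1) g)/D)) * pd 1 (F a)
    + (monomial (R := K) (md 0 0 0) (coeff (R := K) (md 0 0 2) g / 3)
      + monomial (R := K) (md 0 0 1) (coeff (R := K) (md 0 0 3) g / 3)
      + monomial (R := K) (md 1 0 0) ((9 * coeff (R := K) (md 1 0 2) g - 3*a* coeff (R := K) (md 0 2 1) g
          + a^2 * coeff (R := K) (md 2 1 0) g)/D)
      + monomial (R := K) (md 0 1 0) ((9 * coeff (R := K) (md 0 1 2) g + a^2 * coeff (R := K) (md 1 2 0) g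
          - 3*a* coeff (R := K) (md 2 0 1) g)/D)) * pd 2 (F a) with hWdef
  have hW : W ∈ J a := by
    refine add_mem (add_mem ?_ ?_) ?_ <;> exact Ideal.mul_mem_left _ _ (pd_mem a _)
  have key : ∀ x y z : ℕ, x + y + z < 4 → coeff (R := K) (md x y z) (g - W) = 0 := by
    intro x y z hxyz
    have hx : x ≤ 3 := by omega
    have hy : y ≤ 3 := by omega
    have hz : z ≤ 3 := by omega
    rw [map_sub, hWdef]
    simp only [pd0_F, pd1_F, pd2_F, mul_add, add_mul, monomial_mul_monomial, md_add, map_add,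
      coeff_monomial, md_eq_iff]
    interval_cases x <;> interval_cases y <;> interval_cases z <;> try omega
    all_goals norm_num
    · simpa using e0
    · exact e3
    · field_simp; ring
    · field_simp; ring
    · exact e2
    · linear_combination e5
    · field_simp; ring
    · field_simp; ring
    · field_simp; ring
    · field_simp; ring
    · exact e1
    · linear_combination e6
    · field_simp; ring
    · linear_combination e4
    · linear_combination e7
    · field_simp; ring
    · field_simp; ring
    · field_simp; ring
    · field_simp; ring
    · field_simp; ring
  have hgW : g - W ∈ J a := by
    apply order4_mem h3 hD
    intro d hd
    rw [eq_md d]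
    exact key _ _ _ hd
  have hfin := add_mem hgW hW
  simpa using hfin

end Reduce


section Final
variable {K : Type} [Field K]

lemma quotient_finrank {a : K} (h3 : (3:K) ≠ 0) (hD : 27 + a ^ 3 ≠ 0) :
    Module.finrank K (MvPowerSeries (Fin 3) K ⧸ J a) = 8 := by
  classical
  have hker : (J a).restrictScalars K ≤ LinearMap.ker (Phi a) := by
    intro x hx
    rw [LinearMap.mem_ker]
    exact Phi_vanish h3 hx
  set Φbar := Submodule.liftQ ((J a).restrictScalars K) (Phi a) hker with hPhibar
  set Ψ : (Fin 8 → K) →ₗ[K] (MvPowerSeries (Fin 3) K ⧸ (J a).restrictScalars K) :=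
    ∑ j : Fin 8, (LinearMap.proj j).smulRight (((J a).restrictScalars K).mkQ (bm j)) with hPsi
  have hsingle : ∀ (c : Fin 8 → K) (j : Fin 8), c j • (Pi.single j (1:K) : Fin 8 → K) = Pi.single j (c j) := by
    intro c j; rw [← Pi.single_smul, smul_eq_mul, mul_one]
  have hPsiApp : ∀ c : Fin 8 → K, Ψ c = ∑ j : Fin 8,
      Submodule.Quotient.mk (c j • bm j) := by
    intro c
    rw [hPsi, LinearMap.sum_apply]
    refine Finset.sum_congr rfl fun j _ => ?_
    rw [LinearMap.smulRight_apply, LinearMap.proj_apply, Submodule.mkQ_apply,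
      ← Submodule.Quotient.mk_smul]
  have h1 : ∀ c, Φbar (Ψ c) = c := by
    intro c
    rw [hPsiApp, map_sum]
    have : ∀ j : Fin 8, Φbar (Submodule.Quotient.mk (c j • bm j)) = Pi.single j (c j) := by
      intro j
      rw [hPhibar, Submodule.liftQ_apply, map_smul, Phi_basis, hsingle]
    rw [Finset.sum_congr rfl fun j _ => this j, Finset.univ_sum_single]
  have h2 : ∀ x, Ψ (Φbar x) = x := by
    intro x
    obtain ⟨g, rfl⟩ := Submodule.mkQ_surjective _ x
    rw [Submodule.mkQ_apply, hPhibar, Submodule.liftQ_apply, hPsiApp]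
    have hs : (∑ j : Fin 8, (Submodule.Quotient.mk (Phi a g j • bm j) :
        MvPowerSeries (Fin 3) K ⧸ (J a).restrictScalars K))
        = Submodule.Quotient.mk (∑ j : Fin 8, Phi a g j • bm j) := by
      simp_rw [← Submodule.mkQ_apply, ← map_sum]
    rw [hs, Submodule.Quotient.eq]
    have hmem : g - (∑ j : Fin 8, Phi a g j • bm j) ∈ J a := by
      apply reduce h3 hD
      have : Phi a (g - ∑ j : Fin 8, Phi a g j • bm j)
          = Phi a g - ∑ j : Fin 8, Phi a g j • (Pi.single j (1:K) : Fin 8 → K) := by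
        rw [map_sub, map_sum]
        congr 1
        exact Finset.sum_congr rfl fun j _ => by rw [map_smul, Phi_basis]
      rw [this]
      rw [Finset.sum_congr rfl fun j _ => hsingle (Phi a g) j, Finset.univ_sum_single, sub_self]
    simpa using neg_mem hmem
  let e : (MvPowerSeries (Fin 3) K ⧸ (J a).restrictScalars K) ≃ₗ[K] (Fin 8 → K) :=
    LinearEquiv.ofLinear Φbar Ψ (LinearMap.ext h1) (LinearMap.ext h2)
  rw [← (Submodule.Quotient.restrictScalarsEquiv K (J a)).finrank_eq, e.finrank_eq,
    Module.finrank_fin_fun]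

end Final

end Stmt6Aux

theorem stmt6 (K : Type) [Field K] (p : ℕ) [CharP K p] (hp : 3 < p) (a : K)
    (ha : a ^ 3 + 27 ≠ 0) :
    milnor K (X (0 : Fin 3) ^ 3 + X 1 ^ 3 + X 2 ^ 3 + C (σ := Fin 3) (R := K) a * X 0 * X 1 * X 2) = 8 := by
  have h3 : (3:K) ≠ 0 := by
    intro h0
    have h3' : ((3:ℕ):K) = 0 := by exact_mod_cast h0
    rw [CharP.cast_eq_zero_iff K p 3] at h3'
    have := Nat.le_of_dvd (by norm_num) h3'
    omega
  have hD : 27 + a ^ 3 ≠ 0 := by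
    intro h
    exact ha (by linear_combination h)
  have hmil : milnor K (X (0 : Fin 3) ^ 3 + X 1 ^ 3 + X 2 ^ 3 + C (σ := Fin 3) (R := K) a * X 0 * X 1 * X 2)
      = Module.finrank K (MvPowerSeries (Fin 3) K ⧸ Stmt6Aux.J a) := rfl
  rw [hmil]
  exact Stmt6Aux.quotient_finrank h3 hD
end

section
/- Let K be an algebraically closed field and f ∈ K[x,y,z] a nonzero reducible homogeneous cubic. Then f is equivalent under invertible linear change of coordinates to one of: x^3, x^2 y, x^2 z + y z^2, x^3 + x y z, x^3 + x z^2, x y z. -/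
set_option maxHeartbeats 1000000

open MvPolynomial Finsupp

namespace Stmt9Aux

variable {K : Type} [Field K]

noncomputable def T (A : Matrix (Fin 3) (Fin 3) K) (f : MvPolynomial (Fin 3) K) :
    MvPolynomial (Fin 3) K :=
  aeval (fun i => ∑ j, MvPolynomial.C (A i j) * X j) f

def S (K : Type) [Field K] : Set (MvPolynomial (Fin 3) K) :=
  ({X 0 ^ 3, X 0 ^ 2 * X 1, X 0 ^ 2 * X 2 + X 1 * X 2 ^ 2,
    X 0 ^ 3 + X 0 * X 1 * X 2, X 0 ^ 3 + X 0 * X 2 ^ 2, X 0 * X 1 * X 2} :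
    Set (MvPolynomial (Fin 3) K))

def Good (f : MvPolynomial (Fin 3) K) : Prop :=
  ∃ A : Matrix (Fin 3) (Fin 3) K, IsUnit A.det ∧ T A f ∈ S K

lemma T_comp (A B : Matrix (Fin 3) (Fin 3) K) (f : MvPolynomial (Fin 3) K) :
    T A (T B f) = T (B * A) f := by
  unfold T
  rw [comp_aeval_apply]
  have hfun : (fun i => (aeval fun i => ∑ j, MvPolynomial.C (A i j) * X j)
      (∑ j, MvPolynomial.C (B i j) * X j))
      = (fun i => ∑ j, MvPolynomial.C ((B * A) i j) * (X j : MvPolynomial (Fin 3) K)) := by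
    funext i
    simp only [map_sum, map_mul, aeval_C, aeval_X, algebraMap_eq, Matrix.mul_apply,
      Fin.sum_univ_three, map_add]
    ring
  rw [hfun]

lemma T_one (f : MvPolynomial (Fin 3) K) : T 1 f = f := by
  unfold T
  have : (fun i => ∑ j, MvPolynomial.C ((1 : Matrix (Fin 3) (Fin 3) K) i j) * X j)
      = (X : Fin 3 → MvPolynomial (Fin 3) K) := by
    funext i
    fin_cases i <;>
      simp [Fin.sum_univ_three, Matrix.one_apply]
  rw [this, aeval_X_left_apply]

lemma good_step (B : Matrix (Fin 3) (Fin 3) K) (f : MvPolynomial (Fin 3) K)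
    (hB : IsUnit B.det) (h : Good (T B f)) : Good f := by
  obtain ⟨A, hA, hmem⟩ := h
  exact ⟨B * A, by simpa using hB.mul hA, by rw [← T_comp]; exact hmem⟩

lemma good_congr {f f' : MvPolynomial (Fin 3) K} (h : f = f') (hg : Good f') : Good f :=
  h ▸ hg

lemma good_mem {f : MvPolynomial (Fin 3) K} (h : f ∈ S K) : Good f :=
  ⟨1, by simp, by rwa [T_one]⟩

lemma T_ne_zero (A : Matrix (Fin 3) (Fin 3) K) (hA : IsUnit A.det)
    (f : MvPolynomial (Fin 3) K) (hf : f ≠ 0) : T A f ≠ 0 := by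
  intro h
  have h2 : T (A * A⁻¹) f = 0 := by rw [← T_comp, h]; unfold T; simp
  rw [Matrix.mul_nonsing_inv A hA, T_one] at h2
  exact hf h2

lemma T_X (A : Matrix (Fin 3) (Fin 3) K) (i : Fin 3) :
    T A (X i) = C (A i 0) * X 0 + C (A i 1) * X 1 + C (A i 2) * X 2 := by
  simp [T, Fin.sum_univ_three]

lemma T_mul (A : Matrix (Fin 3) (Fin 3) K) (f g : MvPolynomial (Fin 3) K) :
    T A (f * g) = T A f * T A g := by simp [T]

lemma T_add (A : Matrix (Fin 3) (Fin 3) K) (f g : MvPolynomial (Fin 3) K) :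
    T A (f + g) = T A f + T A g := by simp [T]

lemma T_pow (A : Matrix (Fin 3) (Fin 3) K) (f : MvPolynomial (Fin 3) K) (n : ℕ) :
    T A (f ^ n) = T A f ^ n := by simp [T]

lemma T_C (A : Matrix (Fin 3) (Fin 3) K) (r : K) : T A (C r) = C r := by
  simp [T, algebraMap_eq]

lemma fin3_ext {m m' : Fin 3 →₀ ℕ} (h0 : m 0 = m' 0) (h1 : m 1 = m' 1)
    (h2 : m 2 = m' 2) : m = m' := by
  ext i; fin_cases i <;> assumption

lemma degree_fin3 (m : Fin 3 →₀ ℕ) : m.degree = m 0 + m 1 + m 2 := by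
  rw [Finsupp.degree_apply,
    Finset.sum_subset (Finset.subset_univ m.support)
      (fun i _ hi => Finsupp.notMem_support_iff.mp hi), Fin.sum_univ_three]

lemma finsupp_eq_iff (c m : Fin 3 →₀ ℕ) :
    c = m ↔ (c 0 = m 0 ∧ c 1 = m 1 ∧ c 2 = m 2) :=
  ⟨fun h => by subst h; exact ⟨rfl, rfl, rfl⟩, fun ⟨a, b, c⟩ => fin3_ext a b c⟩

lemma XX (i j : Fin 3) :
    (X i * X j : MvPolynomial (Fin 3) K)
      = monomial (Finsupp.single i 1 + Finsupp.single j 1) 1 := by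
  simp [X, monomial_mul]

lemma rep1 (p : MvPolynomial (Fin 3) K) (hp : p.IsHomogeneous 1) :
    p = C (coeff (single 0 1) p) * X 0 + C (coeff (single 1 1) p) * X 1
        + C (coeff (single 2 1) p) * X 2 := by
  ext m
  simp only [coeff_add, coeff_C_mul, coeff_X']
  by_cases h : m.degree = 1
  · rw [degree_fin3] at h
    rcases (by omega : (m 0 = 1 ∧ m 1 = 0 ∧ m 2 = 0) ∨ (m 0 = 0 ∧ m 1 = 1 ∧ m 2 = 0)
        ∨ (m 0 = 0 ∧ m 1 = 0 ∧ m 2 = 1)) with ⟨h0,h1,h2⟩|⟨h0,h1,h2⟩|⟨h0,h1,h2⟩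
    · have hm : m = Finsupp.single (0 : Fin 3) 1 := fin3_ext
        (by simp [Finsupp.single_apply, h0]) (by simp [Finsupp.single_apply, h1])
        (by simp [Finsupp.single_apply, h2])
      subst hm
      simp [Finsupp.single_eq_single_iff, Finsupp.single_apply]
    · have hm : m = Finsupp.single (1 : Fin 3) 1 := fin3_ext
        (by simp [Finsupp.single_apply, h0]) (by simp [Finsupp.single_apply, h1])
        (by simp [Finsupp.single_apply, h2])
      subst hm
      simp [Finsupp.single_eq_single_iff, Finsupp.single_apply]
    · have hm : m = Finsupp.single (2 : Fin 3) 1 := fin3_ext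
        (by simp [Finsupp.single_apply, h0]) (by simp [Finsupp.single_apply, h1])
        (by simp [Finsupp.single_apply, h2])
      subst hm
      simp [Finsupp.single_eq_single_iff, Finsupp.single_apply]
  · have hz := hp.coeff_eq_zero h
    rw [degree_fin3] at h
    have n0 : Finsupp.single (0 : Fin 3) 1 ≠ m := fun he => h (by
      rw [← he]; simp [Finsupp.single_apply])
    have n1 : Finsupp.single (1 : Fin 3) 1 ≠ m := fun he => h (by
      rw [← he]; simp [Finsupp.single_apply])
    have n2 : Finsupp.single (2 : Fin 3) 1 ≠ m := fun he => h (by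
      rw [← he]; simp [Finsupp.single_apply])
    simp [hz, n0, n1, n2]

noncomputable def Q (a b c d e g : K) : MvPolynomial (Fin 3) K :=
  C a * X 0 ^ 2 + C b * (X 0 * X 1) + C c * (X 0 * X 2)
    + C d * X 1 ^ 2 + C e * (X 1 * X 2) + C g * X 2 ^ 2

lemma rep2 (p : MvPolynomial (Fin 3) K) (hp : p.IsHomogeneous 2) :
    p = Q (coeff (single 0 2) p) (coeff (single 0 1 + single 1 1) p)
        (coeff (single 0 1 + single 2 1) p) (coeff (single 1 2) p)
        (coeff (single 1 1 + single 2 1) p) (coeff (single 2 2) p) := by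
  rw [Q]
  ext m
  simp only [coeff_add, coeff_C_mul, coeff_X_pow, XX, coeff_monomial]
  by_cases h : m.degree = 2
  · rw [degree_fin3] at h
    rcases (by omega : (m 0 = 2 ∧ m 1 = 0 ∧ m 2 = 0) ∨ (m 0 = 1 ∧ m 1 = 1 ∧ m 2 = 0)
        ∨ (m 0 = 1 ∧ m 1 = 0 ∧ m 2 = 1) ∨ (m 0 = 0 ∧ m 1 = 2 ∧ m 2 = 0)
        ∨ (m 0 = 0 ∧ m 1 = 1 ∧ m 2 = 1) ∨ (m 0 = 0 ∧ m 1 = 0 ∧ m 2 = 2)) with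
      ⟨h0,h1,h2⟩|⟨h0,h1,h2⟩|⟨h0,h1,h2⟩|⟨h0,h1,h2⟩|⟨h0,h1,h2⟩|⟨h0,h1,h2⟩
    · have hm : m = single (0 : Fin 3) 2 := fin3_ext
        (by simp [Finsupp.single_apply, h0]) (by simp [Finsupp.single_apply, h1])
        (by simp [Finsupp.single_apply, h2])
      subst hm; simp [finsupp_eq_iff, Finsupp.single_apply]
    · have hm : m = single (0 : Fin 3) 1 + single 1 1 := fin3_ext
        (by simp [Finsupp.single_apply, h0]) (by simp [Finsupp.single_apply, h1])
        (by simp [Finsupp.single_apply, h2])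
      subst hm; simp [finsupp_eq_iff, Finsupp.single_apply]
    · have hm : m = single (0 : Fin 3) 1 + single 2 1 := fin3_ext
        (by simp [Finsupp.single_apply, h0]) (by simp [Finsupp.single_apply, h1])
        (by simp [Finsupp.single_apply, h2])
      subst hm; simp [finsupp_eq_iff, Finsupp.single_apply]
    · have hm : m = single (1 : Fin 3) 2 := fin3_ext
        (by simp [Finsupp.single_apply, h0]) (by simp [Finsupp.single_apply, h1])
        (by simp [Finsupp.single_apply, h2])
      subst hm; simp [finsupp_eq_iff, Finsupp.single_apply]
    · have hm : m = single (1 : Fin 3) 1 + single 2 1 := fin3_ext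
        (by simp [Finsupp.single_apply, h0]) (by simp [Finsupp.single_apply, h1])
        (by simp [Finsupp.single_apply, h2])
      subst hm; simp [finsupp_eq_iff, Finsupp.single_apply]
    · have hm : m = single (2 : Fin 3) 2 := fin3_ext
        (by simp [Finsupp.single_apply, h0]) (by simp [Finsupp.single_apply, h1])
        (by simp [Finsupp.single_apply, h2])
      subst hm; simp [finsupp_eq_iff, Finsupp.single_apply]
  · have hz := hp.coeff_eq_zero h
    rw [degree_fin3] at h
    have n1 : single (0 : Fin 3) 2 ≠ m := fun he => h (by
      rw [← he]; simp [Finsupp.single_apply])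
    have n2 : single (0 : Fin 3) 1 + single 1 1 ≠ m := fun he => h (by
      rw [← he]; simp [Finsupp.single_apply])
    have n3 : single (0 : Fin 3) 1 + single 2 1 ≠ m := fun he => h (by
      rw [← he]; simp [Finsupp.single_apply])
    have n4 : single (1 : Fin 3) 2 ≠ m := fun he => h (by
      rw [← he]; simp [Finsupp.single_apply])
    have n5 : single (1 : Fin 3) 1 + single 2 1 ≠ m := fun he => h (by
      rw [← he]; simp [Finsupp.single_apply])
    have n6 : single (2 : Fin 3) 2 ≠ m := fun he => h (by
      rw [← he]; simp [Finsupp.single_apply])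
    simp [hz, n1, n2, n3, n4, n5, n6]

lemma Q_congr {a b c d e g a' b' c' d' e' g' : K} (h1 : a = a') (h2 : b = b')
    (h3 : c = c') (h4 : d = d') (h5 : e = e') (h6 : g = g') :
    Q a b c d e g = Q a' b' c' d' e' g' := by
  rw [h1, h2, h3, h4, h5, h6]

lemma T_Q (l m10 m11 m12 m20 m21 m22 a b c d e g : K) :
    T !![l, 0, 0; m10, m11, m12; m20, m21, m22] (X 0 * Q a b c d e g)
      = C l * (X 0 * Q
          (a*l^2 + b*l*m10 + c*l*m20 + d*m10^2 + e*m10*m20 + g*m20^2)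
          (b*l*m11 + c*l*m21 + 2*d*m10*m11 + e*(m10*m21 + m11*m20) + 2*g*m20*m21)
          (b*l*m12 + c*l*m22 + 2*d*m10*m12 + e*(m10*m22 + m12*m20) + 2*g*m20*m22)
          (d*m11^2 + e*m11*m21 + g*m21^2)
          (2*d*m11*m12 + e*(m11*m22 + m12*m21) + 2*g*m21*m22)
          (d*m12^2 + e*m12*m22 + g*m22^2)) := by
  simp only [Q, T_add, T_mul, T_pow, T_C, T_X]
  simp only [Matrix.cons_val, Matrix.of_apply]
  norm_num
  simp only [map_add, map_mul, map_pow, map_ofNat]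
  ring

lemma mem1 : (X 0 ^ 3 : MvPolynomial (Fin 3) K) ∈ S K := by simp [S]
lemma mem2 : (X 0 ^ 2 * X 1 : MvPolynomial (Fin 3) K) ∈ S K := by simp [S]
lemma mem3 : (X 0 ^ 2 * X 2 + X 1 * X 2 ^ 2 : MvPolynomial (Fin 3) K) ∈ S K := by simp [S]
lemma mem4 : (X 0 ^ 3 + X 0 * X 1 * X 2 : MvPolynomial (Fin 3) K) ∈ S K := by simp [S]
lemma mem5 : (X 0 ^ 3 + X 0 * X 2 ^ 2 : MvPolynomial (Fin 3) K) ∈ S K := by simp [S]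
lemma mem6 : (X 0 * X 1 * X 2 : MvPolynomial (Fin 3) K) ∈ S K := by simp [S]

lemma leaf_x2y : Good (X 0 * Q (0:K) 1 0 0 0 0) :=
  good_congr (by simp only [Q, map_zero, map_one, zero_mul, one_mul, zero_add, add_zero]; ring)
    (good_mem mem2)

lemma leaf_xyz : Good (X 0 * Q (0:K) 0 0 0 1 0) :=
  good_congr (by simp only [Q, map_zero, map_one, zero_mul, one_mul, zero_add, add_zero]; ring)
    (good_mem mem6)

variable [IsAlgClosed K]

lemma leaf_cubic (a : K) (ha : a ≠ 0) : Good (X 0 * Q a 0 0 0 0 0) := by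
  obtain ⟨l, hl⟩ := IsAlgClosed.exists_pow_nat_eq (a⁻¹ : K) (n := 3) (by norm_num)
  have hl0 : l ≠ 0 := by
    intro h; rw [h] at hl; simp at hl; exact ha hl.symm
  have hla : l ^ 3 * a = 1 := by rw [hl]; field_simp
  have hCla : (C l : MvPolynomial (Fin 3) K) ^ 3 * C a = 1 := by
    rw [← map_pow, ← map_mul, hla, map_one]
  apply good_step !![l,0,0;0,1,0;0,0,1] _
    (by
      rw [show (!![l,0,0;0,1,0;0,0,1] : Matrix (Fin 3) (Fin 3) K).det = l from by
        simp [Matrix.det_fin_three]]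
      exact isUnit_iff_ne_zero.mpr hl0)
  refine good_congr (f' := X 0 ^ 3) ?_ (good_mem mem1)
  rw [T_Q]
  simp only [Q, map_add, map_mul, map_pow, map_zero, map_one, map_ofNat]
  linear_combination (X 0 : MvPolynomial (Fin 3) K) ^ 3 * hCla

lemma leaf_secant (a : K) (ha : a ≠ 0) : Good (X 0 * Q a 0 0 0 1 0) := by
  obtain ⟨l, hl⟩ := IsAlgClosed.exists_pow_nat_eq (a⁻¹ : K) (n := 3) (by norm_num)
  have hl0 : l ≠ 0 := by
    intro h; rw [h] at hl; simp at hl; exact ha hl.symm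
  have hla : l ^ 3 * a = 1 := by rw [hl]; field_simp
  have hCla : (C l : MvPolynomial (Fin 3) K) ^ 3 * C a = 1 := by
    rw [← map_pow, ← map_mul, hla, map_one]
  have hlm : l * (l ^ 2 * a) = 1 := by linear_combination hla
  have hClm : (C l : MvPolynomial (Fin 3) K) * (C l ^ 2 * C a) = 1 := by
    rw [← map_pow, ← map_mul, ← map_mul, hlm, map_one]
  apply good_step !![l,0,0; 0, l^2*a, 0; 0,0,1] _
    (by
      rw [show (!![l,0,0; 0, l^2*a, 0; 0,0,1] : Matrix (Fin 3) (Fin 3) K).det = 1 from by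
        simp [Matrix.det_fin_three]; linear_combination hla]
      exact isUnit_one)
  refine good_congr (f' := X 0 ^ 3 + X 0 * X 1 * X 2) ?_ (good_mem mem4)
  rw [T_Q]
  simp only [Q, map_add, map_mul, map_pow, map_zero, map_one, map_ofNat]
  linear_combination (X 0 : MvPolynomial (Fin 3) K) ^ 3 * hCla
    + (X 0 * X 1 * X 2 : MvPolynomial (Fin 3) K) * hClm

lemma leaf_tangent : Good (X 0 * Q (0:K) 0 1 1 0 0) := by
  apply good_step !![0,0,1; 1,0,0; 0,1,0] _
    (by
      rw [show (!![0,0,1; 1,0,0; 0,1,0] : Matrix (Fin 3) (Fin 3) K).det = 1 from by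
        simp [Matrix.det_fin_three]]
      exact isUnit_one)
  refine good_congr (f' := X 0 ^ 2 * X 2 + X 1 * X 2 ^ 2) ?_ (good_mem mem3)
  simp only [Q, T_add, T_mul, T_pow, T_C, T_X]
  simp only [Matrix.cons_val, Matrix.of_apply]
  norm_num [Matrix.vecHead, Matrix.vecTail]
  ring

lemma leaf_xy2 : Good (X 0 * Q (0:K) 0 0 1 0 0) := by
  apply good_step !![0,1,0; 1,0,0; 0,0,1] _
    (by
      rw [show (!![0,1,0; 1,0,0; 0,0,1] : Matrix (Fin 3) (Fin 3) K).det = -1 from by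
        simp [Matrix.det_fin_three]]
      exact IsUnit.neg isUnit_one)
  refine good_congr (f' := X 0 ^ 2 * X 1) ?_ (good_mem mem2)
  simp only [Q, T_add, T_mul, T_pow, T_C, T_X]
  simp only [Matrix.cons_val, Matrix.of_apply]
  norm_num [Matrix.vecHead, Matrix.vecTail]
  ring

lemma leaf_conc (a : K) (ha : a ≠ 0) : Good (X 0 * Q a 0 0 1 0 0) := by
  obtain ⟨l, hl⟩ := IsAlgClosed.exists_pow_nat_eq (a⁻¹ : K) (n := 3) (by norm_num)
  have hl0 : l ≠ 0 := by
    intro h; rw [h] at hl; simp at hl; exact ha hl.symm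
  have hla : l ^ 3 * a = 1 := by rw [hl]; field_simp
  obtain ⟨m, hm⟩ := IsAlgClosed.exists_pow_nat_eq (l ^ 2 * a : K) (n := 2) (by norm_num)
  have hm0 : m ≠ 0 := by
    intro h
    rw [h] at hm
    have h2 : l ^ 2 * a = 0 := by rw [← hm]; ring
    rcases mul_eq_zero.mp h2 with h' | h'
    · exact hl0 (pow_eq_zero_iff (by norm_num) |>.mp h')
    · exact ha h'
  have hlm : l * m ^ 2 = 1 := by rw [hm]; linear_combination hla
  have hCla : (C l : MvPolynomial (Fin 3) K) ^ 3 * C a = 1 := by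
    rw [← map_pow, ← map_mul, hla, map_one]
  have hClm : (C l : MvPolynomial (Fin 3) K) * C m ^ 2 = 1 := by
    rw [← map_pow, ← map_mul, hlm, map_one]
  apply good_step !![l,0,0; 0,0,m; 0,1,0] _
    (by
      rw [show (!![l,0,0; 0,0,m; 0,1,0] : Matrix (Fin 3) (Fin 3) K).det = -(l*m) from by
        simp [Matrix.det_fin_three]]
      exact (IsUnit.neg (isUnit_iff_ne_zero.mpr (mul_ne_zero hl0 hm0))))
  refine good_congr (f' := X 0 ^ 3 + X 0 * X 2 ^ 2) ?_ (good_mem mem5)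
  rw [T_Q]
  simp only [Q, map_add, map_mul, map_pow, map_zero, map_one, map_ofNat]
  linear_combination (X 0 : MvPolynomial (Fin 3) K) ^ 3 * hCla
    + (X 0 * X 2 ^ 2 : MvPolynomial (Fin 3) K) * hClm

lemma red_S0b (a b c : K) (hb : b ≠ 0) : Good (X 0 * Q a b c 0 0 0) := by
  apply good_step !![1,0,0; -(a/b), 1/b, -(c/b); 0,0,1] _
    (by
      rw [show (!![1,0,0; -(a/b), 1/b, -(c/b); 0,0,1] : Matrix (Fin 3) (Fin 3) K).det = 1/b from
        by simp [Matrix.det_fin_three]]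
      exact isUnit_iff_ne_zero.mpr (div_ne_zero one_ne_zero hb))
  refine good_congr ?_ leaf_x2y
  rw [T_Q, map_one, one_mul]
  exact congrArg (fun t => X 0 * t)
    (Q_congr (by field_simp; ring) (by field_simp; ring) (by field_simp; ring)
      (by ring) (by ring) (by ring))

lemma red_S0c (a b c : K) (hc : c ≠ 0) : Good (X 0 * Q a b c 0 0 0) := by
  apply good_step !![1,0,0; 0,0,1; -(a/c), 1/c, -(b/c)] _
    (by
      rw [show (!![1,0,0; 0,0,1; -(a/c), 1/c, -(b/c)] : Matrix (Fin 3) (Fin 3) K).det = -(1/c)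
        from by simp [Matrix.det_fin_three]]
      exact (isUnit_iff_ne_zero.mpr (div_ne_zero one_ne_zero hc)).neg)
  refine good_congr ?_ leaf_x2y
  rw [T_Q, map_one, one_mul]
  exact congrArg (fun t => X 0 * t)
    (Q_congr (by field_simp; ring) (by field_simp; ring) (by field_simp; ring)
      (by ring) (by ring) (by ring))

lemma case_S0 (a b c : K) (hne : X 0 * Q a b c 0 0 0 ≠ 0) : Good (X 0 * Q a b c 0 0 0) := by
  by_cases hb : b = 0
  · by_cases hc : c = 0
    · subst hb hc
      have ha : a ≠ 0 := by
        intro h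
        exact hne (by rw [h]; simp [Q])
      exact leaf_cubic a ha
    · exact red_S0c a b c hc
  · exact red_S0b a b c hb

lemma case_C (a b c : K) : Good (X 0 * Q a b c 0 1 0) := by
  have next : Good (X 0 * Q (a - b*c) 0 0 0 1 0) := by
    by_cases h : a - b*c = 0
    · rw [h]; exact leaf_xyz
    · exact leaf_secant _ h
  apply good_step !![1,0,0; -c,1,0; -b,0,1] _
    (by
      rw [show (!![1,0,0; -c,1,0; -b,0,1] : Matrix (Fin 3) (Fin 3) K).det = 1 from by
        simp [Matrix.det_fin_three]]
      exact isUnit_one)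
  refine good_congr ?_ next
  rw [T_Q, map_one, one_mul]
  exact congrArg (fun t => X 0 * t)
    (Q_congr (by ring) (by ring) (by ring) (by ring) (by ring) (by ring))

lemma case_B2 (a c : K) : Good (X 0 * Q a 0 c 1 0 0) := by
  by_cases hc : c = 0
  · subst hc
    by_cases ha : a = 0
    · rw [ha]; exact leaf_xy2
    · exact leaf_conc a ha
  · apply good_step !![1,0,0; 0,1,0; -(a/c), 0, 1/c] _
      (by
        rw [show (!![1,0,0; 0,1,0; -(a/c), 0, 1/c] : Matrix (Fin 3) (Fin 3) K).det = 1/c from by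
          simp [Matrix.det_fin_three]]
        exact isUnit_iff_ne_zero.mpr (div_ne_zero one_ne_zero hc))
    refine good_congr ?_ leaf_tangent
    rw [T_Q, map_one, one_mul]
    exact congrArg (fun t => X 0 * t)
      (Q_congr (by field_simp; ring) (by ring) (by field_simp; ring) (by ring) (by ring) (by ring))

lemma red_B (a b c : K) (hchar : (2:K) ≠ 0) : Good (X 0 * Q a b c 1 0 0) := by
  apply good_step !![1,0,0; -(b/2), 1, 0; 0,0,1] _
    (by
      rw [show (!![1,0,0; -(b/2), 1, 0; 0,0,1] : Matrix (Fin 3) (Fin 3) K).det = 1 from by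
        simp [Matrix.det_fin_three]]
      exact isUnit_one)
  refine good_congr ?_ (case_B2 (a - (b/2)^2) c)
  rw [T_Q, map_one, one_mul]
  exact congrArg (fun t => X 0 * t)
    (Q_congr (by field_simp; ring) (by field_simp; ring) (by ring)
      (by ring) (by ring) (by ring))

lemma red_rank2 (a b c G : K) (hchar : (2:K) ≠ 0) (hG : G ≠ 0) :
    Good (X 0 * Q a b c 1 0 G) := by
  obtain ⟨σ, hσ⟩ := IsAlgClosed.exists_pow_nat_eq (-G) (n := 2) (by norm_num)
  have hG' : G = -σ^2 := by linear_combination hσ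
  subst hG'
  have hσ0 : σ ≠ 0 := fun h => hG (by rw [h]; ring)
  apply good_step !![1,0,0; 0, 1/2, 1/2; 0, 1/(2*σ), -(1/(2*σ))] _
    (by
      rw [show (!![1,0,0; 0, 1/2, 1/2; 0, 1/(2*σ), -(1/(2*σ))] :
          Matrix (Fin 3) (Fin 3) K).det = -(1/(2*σ)) from by
        simp [Matrix.det_fin_three]; field_simp; ring]
      exact (isUnit_iff_ne_zero.mpr
        (div_ne_zero one_ne_zero (mul_ne_zero hchar hσ0))).neg)
  refine good_congr ?_ (case_C a (b*(1/2) + c*(1/(2*σ))) (b*(1/2) - c*(1/(2*σ))))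
  rw [T_Q, map_one, one_mul]
  exact congrArg (fun t => X 0 * t)
    (Q_congr (by ring) (by ring) (by ring)
      (by field_simp <;> ring) (by field_simp <;> ring) (by field_simp <;> ring))

lemma case_D (a b c d e g : K) (hchar : (2:K) ≠ 0) (hd : d ≠ 0) :
    Good (X 0 * Q a b c d e g) := by
  obtain ⟨s, hs⟩ := IsAlgClosed.exists_pow_nat_eq (d : K) (n := 2) (by norm_num)
  subst hs
  have hs0 : s ≠ 0 := fun h => hd (by rw [h]; ring)
  have next : Good (X 0 * Q a (b*(1/s)) (c - b*(e/(2*s^2))) 1 0 (g - (e/(2*s))^2)) := by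
    by_cases hw : g - (e/(2*s))^2 = 0
    · rw [hw]; exact red_B a (b*(1/s)) (c - b*(e/(2*s^2))) hchar
    · exact red_rank2 a _ _ _ hchar hw
  apply good_step !![1,0,0; 0, 1/s, -(e/(2*s^2)); 0,0,1] _
    (by
      rw [show (!![1,0,0; 0, 1/s, -(e/(2*s^2)); 0,0,1] :
          Matrix (Fin 3) (Fin 3) K).det = 1/s from by
        simp [Matrix.det_fin_three]]
      exact isUnit_iff_ne_zero.mpr (div_ne_zero one_ne_zero hs0))
  refine good_congr ?_ next
  rw [T_Q, map_one, one_mul]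
  exact congrArg (fun t => X 0 * t)
    (Q_congr (by ring) (by ring) (by ring)
      (by field_simp <;> ring) (by field_simp <;> ring) (by field_simp <;> ring))

lemma main (hchar : (2:K) ≠ 0) (a b c d e g : K) (hne : X 0 * Q a b c d e g ≠ 0) :
    Good (X 0 * Q a b c d e g) := by
  by_cases hd : d = 0
  · subst hd
    by_cases hg : g = 0
    · subst hg
      by_cases he : e = 0
      · subst he
        exact case_S0 a b c hne
      · apply good_step !![1,0,0; 0, 1/e, 0; 0,0,1] _
          (by
            rw [show (!![1,0,0; 0, 1/e, 0; 0,0,1] :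
                Matrix (Fin 3) (Fin 3) K).det = 1/e from by
              simp [Matrix.det_fin_three]]
            exact isUnit_iff_ne_zero.mpr (div_ne_zero one_ne_zero he))
        refine good_congr ?_ (case_C a (b*(1/e)) c)
        rw [T_Q, map_one, one_mul]
        exact congrArg (fun t => X 0 * t)
          (Q_congr (by ring) (by ring) (by ring) (by ring) (by field_simp; ring) (by ring))
    · apply good_step !![1,0,0; 0,0,1; 0,1,0] _
        (by
          rw [show (!![1,0,0; 0,0,1; 0,1,0] : Matrix (Fin 3) (Fin 3) K).det = -1 from by
            simp [Matrix.det_fin_three]]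
          exact isUnit_one.neg)
      refine good_congr ?_ (case_D a c b g e 0 hchar hg)
      rw [T_Q, map_one, one_mul]
      exact congrArg (fun t => X 0 * t)
        (Q_congr (by ring) (by ring) (by ring) (by ring) (by ring) (by ring))
  · exact case_D a b c d e g hchar hd

lemma lin_homog (k : Fin 3 → K) :
    (∑ j, C (k j) * X j : MvPolynomial (Fin 3) K).IsHomogeneous 1 := by
  rw [Fin.sum_univ_three]
  have h : ∀ j : Fin 3, (C (k j) * X j : MvPolynomial (Fin 3) K).IsHomogeneous 1 := fun j => by
    simpa using (isHomogeneous_C _ (k j)).mul (isHomogeneous_X _ j)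
  exact ((h 0).add (h 1)).add (h 2)

lemma T_homog2 (M : Matrix (Fin 3) (Fin 3) K) (g₂ : MvPolynomial (Fin 3) K)
    (h2 : g₂.IsHomogeneous 2) : (T M g₂).IsHomogeneous 2 := by
  have := h2.aeval (fun i => ∑ j, MvPolynomial.C (M i j) * X j) (fun i => lin_homog _)
  simpa [T] using this

lemma stage1 (hchar : (2:K) ≠ 0) (f g₁ g₂ : MvPolynomial (Fin 3) K) (hf0 : f ≠ 0)
    (hf : f = g₁ * g₂) (h1 : g₁.IsHomogeneous 1) (h2 : g₂.IsHomogeneous 2) :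
    Good f := by
  obtain ⟨a, b, c, hrep⟩ : ∃ a b c : K, g₁ = C a * X 0 + C b * X 1 + C c * X 2 :=
    ⟨_, _, _, rep1 g₁ h1⟩
  have key : ∀ M : Matrix (Fin 3) (Fin 3) K, IsUnit M.det → T M g₁ = X 0 → Good f := by
    intro M hdet hTg
    apply good_step M f hdet
    have hq : (T M g₂).IsHomogeneous 2 := T_homog2 M g₂ h2
    have hrep2 := rep2 _ hq
    have hTf : T M f = X 0 * (T M g₂) := by rw [hf, T_mul, hTg]
    rw [hTf, hrep2]
    apply main hchar
    rw [← hrep2, ← hTf]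
    exact T_ne_zero M hdet f hf0
  by_cases ha : a ≠ 0
  · have hu : a * a⁻¹ = 1 := mul_inv_cancel₀ ha
    have hu0 : a⁻¹ ≠ 0 := inv_ne_zero ha
    have hCu : (C a : MvPolynomial (Fin 3) K) * C a⁻¹ = 1 := by
      rw [← map_mul, hu, map_one]
    apply key !![a⁻¹, -(a⁻¹*b), -(a⁻¹*c); 0,1,0; 0,0,1]
    · rw [show (!![a⁻¹, -(a⁻¹*b), -(a⁻¹*c); 0,1,0; 0,0,1] :
          Matrix (Fin 3) (Fin 3) K).det = a⁻¹ from by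
          simp [Matrix.det_fin_three, Matrix.vecHead, Matrix.vecTail]]
      exact isUnit_iff_ne_zero.mpr hu0
    · rw [hrep]
      simp only [T_add, T_mul, T_C, T_X]
      simp only [Matrix.cons_val, Matrix.of_apply]
      norm_num [Matrix.vecHead, Matrix.vecTail]
      try simp only [map_neg, map_mul]
      linear_combination (X 0 - C b * X 1 - C c * X 2 : MvPolynomial (Fin 3) K) * hCu
  · push_neg at ha
    by_cases hb : b ≠ 0
    · have hu : b * b⁻¹ = 1 := mul_inv_cancel₀ hb
      have hu0 : b⁻¹ ≠ 0 := inv_ne_zero hb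
      have hCu : (C b : MvPolynomial (Fin 3) K) * C b⁻¹ = 1 := by
        rw [← map_mul, hu, map_one]
      apply key !![0,1,0; b⁻¹, -(b⁻¹*a), -(b⁻¹*c); 0,0,1]
      · rw [show (!![0,1,0; b⁻¹, -(b⁻¹*a), -(b⁻¹*c); 0,0,1] :
            Matrix (Fin 3) (Fin 3) K).det = -b⁻¹ from by
            simp [Matrix.det_fin_three, Matrix.vecHead, Matrix.vecTail]]
        exact (isUnit_iff_ne_zero.mpr hu0).neg
      · rw [hrep]
        simp only [T_add, T_mul, T_C, T_X]
        simp only [Matrix.cons_val, Matrix.of_apply]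
        norm_num [Matrix.vecHead, Matrix.vecTail]
        try simp only [map_neg, map_mul]
        linear_combination (X 0 - C a * X 1 - C c * X 2 : MvPolynomial (Fin 3) K) * hCu
    · push_neg at hb
      by_cases hc : c ≠ 0
      · have hu : c * c⁻¹ = 1 := mul_inv_cancel₀ hc
        have hu0 : c⁻¹ ≠ 0 := inv_ne_zero hc
        have hCu : (C c : MvPolynomial (Fin 3) K) * C c⁻¹ = 1 := by
          rw [← map_mul, hu, map_one]
        apply key !![0,1,0; 0,0,1; c⁻¹, -(c⁻¹*a), -(c⁻¹*b)]
        · rw [show (!![0,1,0; 0,0,1; c⁻¹, -(c⁻¹*a), -(c⁻¹*b)] :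
              Matrix (Fin 3) (Fin 3) K).det = c⁻¹ from by
              simp [Matrix.det_fin_three, Matrix.vecHead, Matrix.vecTail]]
          exact isUnit_iff_ne_zero.mpr hu0
        · rw [hrep]
          simp only [T_add, T_mul, T_C, T_X]
          simp only [Matrix.cons_val, Matrix.of_apply]
          norm_num [Matrix.vecHead, Matrix.vecTail]
          try simp only [map_neg, map_mul]
          linear_combination (X 0 - C a * X 1 - C b * X 2 : MvPolynomial (Fin 3) K) * hCu
      · push_neg at hc
        exact absurd (by rw [hf, hrep, ha, hb, hc]; simp) hf0

end Stmt9Aux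

theorem stmt9 (K : Type) [Field K] [IsAlgClosed K] (hchar : (2 : K) ≠ 0)
    (f : MvPolynomial (Fin 3) K) (hf0 : f ≠ 0)
    (hred : ∃ g₁ g₂ : MvPolynomial (Fin 3) K,
      f = g₁ * g₂ ∧ g₁.IsHomogeneous 1 ∧ g₂.IsHomogeneous 2) :
    ∃ A : Matrix (Fin 3) (Fin 3) K, IsUnit A.det ∧
      aeval (fun i => ∑ j, MvPolynomial.C (A i j) * X j) f ∈
        ({X 0 ^ 3, X 0 ^ 2 * X 1, X 0 ^ 2 * X 2 + X 1 * X 2 ^ 2,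
          X 0 ^ 3 + X 0 * X 1 * X 2, X 0 ^ 3 + X 0 * X 2 ^ 2, X 0 * X 1 * X 2} :
          Set (MvPolynomial (Fin 3) K)) := by
  obtain ⟨g₁, g₂, hf, h1, h2⟩ := hred
  obtain ⟨A, hA, hmem⟩ := Stmt9Aux.stage1 hchar f g₁ g₂ hf0 hf h1 h2
  exact ⟨A, hA, hmem⟩
end
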